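/- arXiv:1401.3638 — 7 statements merged into one kernel-verified Lean document; each statement's English description precedes it below -/
import Mathlib

section
/- Let Γ ≤ S_n be a permutation group and z ∈ Z^n a core point for Γ with z not in the fixed space fix(Γ). Then gcd(z_1, ..., z_n) = 1. -/
noncomputable section

open scoped RealInnerProductSpace

def permAct {n : ℕ} (γ : Equiv.Perm (Fin n)) (x : EuclideanSpace ℝ (Fin n)) :
    EuclideanSpace ℝ (Fin n) := WithLp.toLp 2 (fun i => x (γ⁻¹ i))

def allOnes (n : ℕ) : EuclideanSpace ℝ (Fin n) := WithLp.toLp 2 (fun _ => 1)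

def intVec {n : ℕ} (z : Fin n → ℤ) : EuclideanSpace ℝ (Fin n) := WithLp.toLp 2 (fun i => (z i : ℝ))

def orbitSet {n : ℕ} (Γ : Subgroup (Equiv.Perm (Fin n))) (x : EuclideanSpace ℝ (Fin n)) :
    Set (EuclideanSpace ℝ (Fin n)) := {y | ∃ γ ∈ Γ, y = permAct γ x}

def IsCorePoint {n : ℕ} (Γ : Subgroup (Equiv.Perm (Fin n))) (z : Fin n → ℤ) : Prop :=
  ∀ y : Fin n → ℤ, intVec y ∈ convexHull ℝ (orbitSet Γ (intVec z)) →
    intVec y ∈ orbitSet Γ (intVec z)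

def stabSub {n : ℕ} (Γ : Subgroup (Equiv.Perm (Fin n))) (v : EuclideanSpace ℝ (Fin n)) :
    Subgroup (Equiv.Perm (Fin n)) where
  carrier := {γ | γ ∈ Γ ∧ permAct γ v = v}
  one_mem' := ⟨Γ.one_mem, rfl⟩
  mul_mem' := fun {a b} ha hb => ⟨Γ.mul_mem ha.1 hb.1, by
    have h : permAct (a * b) v = permAct a (permAct b v) := rfl
    rw [h, hb.2, ha.2]⟩
  inv_mem' := fun {a} ha => ⟨Γ.inv_mem ha.1, by
    conv_lhs => rw [← ha.2]
    have h : permAct a⁻¹ (permAct a v) = permAct (a⁻¹ * a) v := rfl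
    rw [h, inv_mul_cancel]; rfl⟩

lemma norm_permAct {n : ℕ} (γ : Equiv.Perm (Fin n)) (x : EuclideanSpace ℝ (Fin n)) :
    ‖permAct γ x‖ = ‖x‖ := by
  rw [EuclideanSpace.norm_eq, EuclideanSpace.norm_eq]
  congr 1
  exact Equiv.sum_comp γ⁻¹ (fun i => ‖x i‖ ^ 2)

theorem stmt3 {n : ℕ} (Γ : Subgroup (Equiv.Perm (Fin n))) (z : Fin n → ℤ)
    (hcore : IsCorePoint Γ z)
    (hfix : ¬ ∀ γ ∈ Γ, permAct γ (intVec z) = intVec z) :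
    Finset.univ.gcd z = 1 := by
  push_neg at hfix
  obtain ⟨γ, hγΓ, hγne⟩ := hfix
  set d : ℤ := Finset.univ.gcd z with hd
  by_contra hne1
  have hd0 : d ≠ 0 := by
    intro h0
    have : ∀ i, z i = 0 := fun i =>
      Finset.gcd_eq_zero_iff.mp h0 i (Finset.mem_univ i)
    apply hγne
    ext i
    simp [permAct, intVec, this]
  have hdnn : 0 ≤ d := by
    rw [hd, ← Finset.normalize_gcd, ← Int.abs_eq_normalize]; exact abs_nonneg _
  have hd2 : 2 ≤ d := by omega
  have hdvd : ∀ i, d ∣ z i := fun i => Finset.gcd_dvd (Finset.mem_univ i)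
  -- the witness integral point
  set w : Fin n → ℤ := fun i => z i / d with hw
  have hzw : ∀ i, z i = d * w i := fun i => (Int.mul_ediv_cancel' (hdvd i)).symm
  have h2R : (2:ℝ) ≤ (d:ℝ) := by exact_mod_cast hd2
  set y : Fin n → ℤ := fun i => (d - 1) * w i + w (γ⁻¹ i) with hy
  have hdR : (d : ℝ) ≠ 0 := Int.cast_ne_zero.mpr hd0
  have hcomb : intVec y =
      ((d - 1 : ℝ) / d) • intVec z + ((1 : ℝ) / d) • permAct γ (intVec z) := by
    ext i
    simp only [intVec, permAct, hy, PiLp.add_apply, PiLp.smul_apply, smul_eq_mul, PiLp.toLp_apply]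
    push_cast
    rw [hzw i, hzw (γ⁻¹ i)]
    push_cast
    field_simp
  have hmem : intVec y ∈ convexHull ℝ (orbitSet Γ (intVec z)) := by
    rw [hcomb]
    refine (convex_convexHull ℝ _) ?_ ?_ ?_ ?_ ?_
    · exact subset_convexHull ℝ _ ⟨1, Γ.one_mem, by ext i; rfl⟩
    · exact subset_convexHull ℝ _ ⟨γ, hγΓ, rfl⟩
    · exact div_nonneg (by linarith) (by linarith)
    · positivity
    · field_simp; ring
  obtain ⟨δ, hδΓ, hδ⟩ := hcore y hmem
  have hlt : ‖intVec y‖ < ‖intVec z‖ := by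
    rw [hcomb]
    refine norm_combo_lt_of_ne le_rfl (le_of_eq (norm_permAct γ _)) (Ne.symm hγne) ?_ ?_ ?_
    · exact div_pos (by linarith) (by linarith)
    · positivity
    · field_simp; ring
  rw [hδ, norm_permAct] at hlt
  exact lt_irrefl _ hlt
end
end

section
/- Let Γ ≤ S_n be a transitive permutation group and z ∈ Z^n. Let E = {i ∈ [n] : z_i is even} and let Γ'(z) ≤ Γ be the setwise stabilizer of E. If some orbit O of Γ'(z) on [n] contains two indices k, l with z_k ≠ z_l, then z is not a core point with respect to Γ. -/
noncomputable section

open scoped RealInnerProductSpace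

theorem stmt4 {n : ℕ} (Γ : Subgroup (Equiv.Perm (Fin n)))
    (htrans : ∀ i j : Fin n, ∃ γ ∈ Γ, γ i = j) (z : Fin n → ℤ)
    (k l : Fin n) (γ : Equiv.Perm (Fin n)) (hγΓ : γ ∈ Γ)
    (hγE : ∀ i : Fin n, Even (z i) ↔ Even (z (γ i)))
    (hkl : γ k = l) (hne : z k ≠ z l) :
    ¬ IsCorePoint Γ z := by
  classical
  intro hcore
  set y : Fin n → ℤ := fun i => (z i + z (γ⁻¹ i)) / 2 with hy
  have hpar : ∀ i, 2 * y i = z i + z (γ⁻¹ i) := by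
    intro i
    have h1 : Even (z (γ⁻¹ i)) ↔ Even (z i) := by
      have := hγE (γ⁻¹ i); simpa using this
    have heven : Even (z i + z (γ⁻¹ i)) := Int.even_add.mpr h1.symm
    obtain ⟨c, hc⟩ := heven
    simp only [hy]
    omega
  have hz_mem : intVec z ∈ orbitSet Γ (intVec z) := ⟨1, Γ.one_mem, by
    ext i; simp [permAct]; rfl⟩
  have hγ_mem : permAct γ (intVec z) ∈ orbitSet Γ (intVec z) := ⟨γ, hγΓ, rfl⟩
  have hmid : intVec y = (1/2 : ℝ) • intVec z + (1/2 : ℝ) • permAct γ (intVec z) := by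
    ext i
    have h2 : (2 * y i : ℝ) = (z i : ℝ) + (z (γ⁻¹ i) : ℝ) := by exact_mod_cast hpar i
    show (y i : ℝ) = (1/2 : ℝ) * (z i : ℝ) + (1/2 : ℝ) * (z (γ⁻¹ i) : ℝ)
    linarith
  have hmem : intVec y ∈ convexHull ℝ (orbitSet Γ (intVec z)) := by
    rw [hmid]
    exact (convex_convexHull ℝ _) (subset_convexHull ℝ _ hz_mem)
      (subset_convexHull ℝ _ hγ_mem) (by norm_num) (by norm_num) (by norm_num)
  obtain ⟨γ', hγ', hyeq⟩ := hcore y hmem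
  have hcoord : ∀ i, y i = z (γ'⁻¹ i) := by
    intro i
    have := congrArg (fun v => v i) hyeq
    simp only [intVec, permAct, PiLp.toLp_apply] at this
    exact_mod_cast this
  have hsum1 : ∑ i, (y i)^2 = ∑ i, (z i)^2 := by
    calc ∑ i, (y i)^2 = ∑ i, (z (γ'⁻¹ i))^2 := by simp [hcoord]
    _ = ∑ i, (z i)^2 := Equiv.sum_comp γ'⁻¹ (fun j => (z j)^2)
  have hsum2 : ∑ i, (z (γ⁻¹ i))^2 = ∑ i, (z i)^2 := Equiv.sum_comp γ⁻¹ (fun j => (z j)^2)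
  have hlt : ∑ i, (2 * y i)^2 < ∑ i, (2*(z i)^2 + 2*(z (γ⁻¹ i))^2) := by
    apply Finset.sum_lt_sum
    · intro i _
      have h := hpar i
      calc (2 * y i)^2 = (z i + z (γ⁻¹ i))^2 := by rw [h]
      _ ≤ 2*(z i)^2 + 2*(z (γ⁻¹ i))^2 := by nlinarith [sq_nonneg (z i - z (γ⁻¹ i))]
    · refine ⟨l, Finset.mem_univ l, ?_⟩
      have h2 : γ⁻¹ l = k := by rw [← hkl]; simp
      have h1 := hpar l
      rw [h2] at h1 ⊢
      have hsub : z l - z k ≠ 0 := sub_ne_zero.mpr (Ne.symm hne)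
      have hpos : 0 < (z l - z k) * (z l - z k) := mul_self_pos.mpr hsub
      calc (2 * y l)^2 = (z l + z k)^2 := by rw [h1]
      _ < 2*(z l)^2 + 2*(z k)^2 := by nlinarith
  have hfinal : (4:ℤ) * ∑ i, (y i)^2 < 4 * ∑ i, (z i)^2 := by
    calc 4 * ∑ i, (y i)^2 = ∑ i, (2 * y i)^2 := by
          rw [Finset.mul_sum]; exact Finset.sum_congr rfl (fun i _ => by ring)
    _ < ∑ i, (2*(z i)^2 + 2*(z (γ⁻¹ i))^2) := hlt
    _ = 4 * ∑ i, (z i)^2 := by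
          rw [Finset.sum_add_distrib, ← Finset.mul_sum, ← Finset.mul_sum, hsum2]; ring
  rw [hsum1] at hfinal
  exact lt_irrefl _ hfinal
end
end

section
/- Let Γ ≤ S_n be a 2-transitive permutation group with n ≥ 3, and let z ∈ Z^n have nonnegative coordinates with min_i z_i = 0 and max_i z_i ≥ 2. If (Σ_{i=1}^n z_i) mod (n−1) ≤ max_i z_i, then the orbit polytope conv(Γz) contains an integral point which is not a vertex (i.e. z is not a core point). -/
noncomputable section

open scoped RealInnerProductSpace

lemma avg_mem {n : ℕ} (hn : 3 ≤ n) (Γ : Subgroup (Equiv.Perm (Fin n)))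
    (h2t : ∀ x1 x2 y1 y2 : Fin n, x1 ≠ x2 → y1 ≠ y2 → ∃ γ ∈ Γ, γ x1 = y1 ∧ γ x2 = y2)
    (z : Fin n → ℤ) (i a : Fin n) :
    (WithLp.toLp 2 (fun j => if j = i then (z a : ℝ) else (((∑ k, z k : ℤ) : ℝ) - (z a : ℝ)) / ((n : ℝ) - 1)) :
      EuclideanSpace ℝ (Fin n)) ∈ convexHull ℝ (orbitSet Γ (intVec z)) := by
  classical
  have hnt : Nontrivial (Fin n) := by
    refine ⟨⟨0, by omega⟩, ⟨1, by omega⟩, ?_⟩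
    simp [Fin.ext_iff]
  set F : Finset (Equiv.Perm (Fin n)) :=
    Finset.univ.filter (fun γ => γ ∈ Γ ∧ γ a = i) with hFdef
  have hmemF : ∀ γ : Equiv.Perm (Fin n), γ ∈ F ↔ γ ∈ Γ ∧ γ a = i := by
    intro γ; simp [hFdef]
  -- nonempty
  obtain ⟨a', ha'⟩ := exists_ne a
  obtain ⟨i', hi'⟩ := exists_ne i
  obtain ⟨γ0, hγ0, hγ0a, -⟩ := h2t a a' i i' (Ne.symm ha') (Ne.symm hi')
  have hFne : F.Nonempty := ⟨γ0, (hmemF γ0).2 ⟨hγ0, hγ0a⟩⟩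
  have hFcard : (0 : ℝ) < (F.card : ℝ) := by
    exact_mod_cast Finset.card_pos.mpr hFne
  -- counting lemma
  have key : ∀ k, k ≠ a → ∀ j, j ≠ i →
      (n - 1) * (F.filter (fun γ => γ k = j)).card = F.card := by
    intro k hk j hj
    have hfib : ∀ j', j' ≠ i →
        (F.filter (fun γ => γ k = j')).card = (F.filter (fun γ => γ k = j)).card := by
      intro j' hj'
      rcases eq_or_ne j' j with rfl | hne
      · rfl
      · obtain ⟨δ, hδ, hδi, hδj⟩ := h2t i j' i j (Ne.symm hj') (Ne.symm hj)
        refine Finset.card_bij' (fun γ _ => δ * γ) (fun γ _ => δ⁻¹ * γ) ?_ ?_ ?_ ?_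
        · intro γ hγ
          simp only [Finset.mem_filter, hmemF] at hγ ⊢
          exact ⟨⟨Γ.mul_mem hδ hγ.1.1, by
              simp [Equiv.Perm.mul_apply, hγ.1.2, hδi]⟩, by
            simp [Equiv.Perm.mul_apply, hγ.2, hδj]⟩
        · intro γ hγ
          simp only [Finset.mem_filter, hmemF] at hγ ⊢
          have h1 : δ⁻¹ i = i := (Equiv.Perm.inv_eq_iff_eq).2 hδi.symm
          have h2 : δ⁻¹ j = j' := (Equiv.Perm.inv_eq_iff_eq).2 hδj.symm
          exact ⟨⟨Γ.mul_mem (Γ.inv_mem hδ) hγ.1.1, by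
              simp [Equiv.Perm.mul_apply, hγ.1.2, h1]⟩, by
            simp [Equiv.Perm.mul_apply, hγ.2, h2]⟩
        · intro γ hγ; simp [mul_assoc]
        · intro γ hγ; simp [mul_assoc]
    have hpart : F.card = ∑ j' ∈ Finset.univ.erase i, (F.filter (fun γ => γ k = j')).card := by
      refine Finset.card_eq_sum_card_fiberwise (fun γ hγ => ?_)
      rw [Finset.mem_coe, Finset.mem_erase]
      have hγ' := (hmemF γ).1 hγ
      refine ⟨fun h => hk (γ.injective ?_), Finset.mem_univ _⟩
      rw [h, hγ'.2]
    have hconst : ∀ j' ∈ Finset.univ.erase i,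
        (F.filter (fun γ => γ k = j')).card = (F.filter (fun γ => γ k = j)).card :=
      fun j' hj' => hfib j' (Finset.mem_erase.1 hj').1
    rw [hpart, Finset.sum_congr rfl hconst, Finset.sum_const, smul_eq_mul,
      Finset.card_erase_of_mem (Finset.mem_univ i), Finset.card_univ, Fintype.card_fin]
  -- n - 1 as a real
  have hn1 : ((n : ℝ) - 1) ≠ 0 := by
    have : (3:ℝ) ≤ (n:ℝ) := by exact_mod_cast hn
    linarith
  have hcast : ((n - 1 : ℕ) : ℝ) = (n : ℝ) - 1 := by
    have : 1 ≤ n := by omega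
    push_cast [this]; ring
  -- the center of mass
  have hCM : F.centerMass (fun _ => (1:ℝ)) (fun γ => permAct γ (intVec z)) ∈
      convexHull ℝ (orbitSet Γ (intVec z)) := by
    refine Finset.centerMass_mem_convexHull F (fun γ _ => zero_le_one) ?_ (fun γ hγ => ?_)
    · rw [Finset.sum_const, nsmul_eq_mul, mul_one]; exact hFcard
    · exact ⟨γ, ((hmemF γ).1 hγ).1, rfl⟩
  have hEq : (WithLp.toLp 2 (fun j => if j = i then (z a : ℝ)
      else (((∑ k, z k : ℤ) : ℝ) - (z a : ℝ)) / ((n : ℝ) - 1)) : EuclideanSpace ℝ (Fin n)) =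
      F.centerMass (fun _ => (1:ℝ)) (fun γ => permAct γ (intVec z)) := by
    rw [Finset.centerMass]
    simp only [one_smul, Finset.sum_const, nsmul_eq_mul, mul_one]
    ext j
    have happ : ((F.card : ℝ)⁻¹ • ∑ γ ∈ F, permAct γ (intVec z)) j
        = (F.card : ℝ)⁻¹ * ∑ γ ∈ F, (z (γ⁻¹ j) : ℝ) := by
      rw [PiLp.smul_apply, smul_eq_mul]
      congr 1
      rw [WithLp.ofLp_sum, Finset.sum_apply]
      rfl
    rw [happ, PiLp.toLp_apply]
    by_cases hji : j = i
    · subst hji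
      have : ∀ γ ∈ F, (z (γ⁻¹ j) : ℝ) = (z a : ℝ) := by
        intro γ hγ
        rw [Equiv.Perm.inv_eq_iff_eq.2 ((hmemF γ).1 hγ).2.symm]
      rw [Finset.sum_congr rfl this, Finset.sum_const, nsmul_eq_mul, if_pos rfl]
      field_simp
    · rw [if_neg hji]
      have e1 : ∀ γ ∈ F, (z (γ⁻¹ j) : ℝ) = ∑ k, if γ k = j then (z k : ℝ) else 0 := by
        intro γ _
        have hcond : ∀ k : Fin n, (γ k = j) = (k = γ⁻¹ j) := by
          intro k
          simp [eq_comm, Equiv.Perm.eq_inv_iff_eq]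
          constructor <;> rintro rfl <;> simp
        simp only [hcond]
        rw [Finset.sum_ite_eq' Finset.univ (γ⁻¹ j) (fun k => (z k : ℝ))]
        simp
      rw [Finset.sum_congr rfl e1, Finset.sum_comm]
      have e2 : ∀ k : Fin n, (∑ γ ∈ F, if γ k = j then (z k:ℝ) else 0)
          = ((F.filter (fun γ => γ k = j)).card : ℝ) * (z k : ℝ) := by
        intro k
        rw [← Finset.sum_filter, Finset.sum_const, nsmul_eq_mul]
      have ha0 : (F.filter (fun γ => γ a = j)).card = 0 := by
        rw [Finset.card_eq_zero, Finset.filter_eq_empty_iff]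
        intro γ hγ
        rw [((hmemF γ).1 hγ).2]
        exact fun h => hji h.symm
      have e3 : ∀ k ∈ Finset.univ.erase a,
          ((F.filter (fun γ => γ k = j)).card : ℝ) * (z k : ℝ)
          = (F.card : ℝ) / ((n:ℝ) - 1) * (z k : ℝ) := by
        intro k hk
        have hkey := key k (Finset.mem_erase.1 hk).1 j hji
        have h5 : ((n:ℝ) - 1) * ((F.filter (fun γ => γ k = j)).card : ℝ) = (F.card : ℝ) := by
          rw [← hcast]
          exact_mod_cast congrArg (fun m : ℕ => (m : ℝ)) hkey
        have hc : ((F.filter (fun γ => γ k = j)).card : ℝ) = (F.card : ℝ) / ((n:ℝ)-1) := by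
          rw [eq_div_iff hn1]; linarith
        rw [hc]
      have esplit : ∑ k : Fin n, ((F.filter (fun γ => γ k = j)).card : ℝ) * (z k : ℝ)
          = ((F.filter (fun γ => γ a = j)).card : ℝ) * (z a : ℝ)
            + ∑ k ∈ Finset.univ.erase a, ((F.filter (fun γ => γ k = j)).card : ℝ) * (z k : ℝ) :=
        (Finset.add_sum_erase _ _ (Finset.mem_univ a)).symm
      rw [Finset.sum_congr rfl (fun k _ => e2 k), esplit, ha0, Finset.sum_congr rfl e3]
      have e4 : ∑ k ∈ Finset.univ.erase a, (F.card : ℝ) / ((n:ℝ) - 1) * (z k : ℝ)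
          = (F.card : ℝ) / ((n:ℝ) - 1) * ((((∑ k, z k : ℤ)) : ℝ) - (z a : ℝ)) := by
        rw [← Finset.mul_sum]
        congr 1
        have := Finset.add_sum_erase Finset.univ (fun k => (z k : ℝ)) (Finset.mem_univ a)
        push_cast
        linarith [this]
      rw [e4]
      push_cast
      have hF0 : (F.card : ℝ) ≠ 0 := ne_of_gt hFcard
      field_simp
      ring
  rw [hEq]
  exact hCM

lemma combo_apply {n : ℕ} (c c' : ℝ) (f g : EuclideanSpace ℝ (Fin n)) (j : Fin n) :
    (c • f + c' • g) j = c * f j + c' * g j := rfl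

theorem stmt5 {n : ℕ} (hn : 3 ≤ n) (Γ : Subgroup (Equiv.Perm (Fin n)))
    (h2t : ∀ x1 x2 y1 y2 : Fin n, x1 ≠ x2 → y1 ≠ y2 →
      ∃ γ ∈ Γ, γ x1 = y1 ∧ γ x2 = y2)
    (z : Fin n → ℤ) (hpos : ∀ i, 0 ≤ z i) (hmin : ∃ i, z i = 0)
    (M : ℤ) (hM : ∀ i, z i ≤ M) (hMmem : ∃ i, z i = M) (hM2 : 2 ≤ M)
    (hmod : (∑ i, z i) % ((n : ℤ) - 1) ≤ M) :
    ∃ y : Fin n → ℤ, intVec y ∈ convexHull ℝ (orbitSet Γ (intVec z)) ∧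
      intVec y ∉ orbitSet Γ (intVec z) := by
  classical
  obtain ⟨b, hb⟩ := hmin
  obtain ⟨a, ha⟩ := hMmem
  have hab : a ≠ b := by intro h; rw [h, hb] at ha; omega
  set S : ℤ := ∑ i, z i with hSdef
  have hnZ : (3:ℤ) ≤ (n:ℤ) := by exact_mod_cast hn
  have hn1Z : (0:ℤ) < (n:ℤ) - 1 := by omega
  set r : ℤ := S % ((n:ℤ)-1) with hrdef
  set q : ℤ := S / ((n:ℤ)-1) with hqdef
  have hr0 : 0 ≤ r := Int.emod_nonneg S (by omega)
  have hqr : ((n:ℤ)-1) * q + r = S := Int.mul_ediv_add_emod S ((n:ℤ)-1)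
  have hrM : r ≤ M := hmod
  -- real facts
  have hN0 : ((n:ℝ) - 1) ≠ 0 := by
    have : (3:ℝ) ≤ (n:ℝ) := by exact_mod_cast hn
    linarith
  have hM0 : ((M:ℝ)) ≠ 0 := by
    have : (2:ℝ) ≤ (M:ℝ) := by exact_mod_cast hM2
    linarith
  have hqrR : ((n:ℝ)-1) * (q:ℝ) + (r:ℝ) = (S:ℝ) := by exact_mod_cast hqr
  -- indices
  set i0 : Fin n := ⟨0, by omega⟩ with hi0def
  set i1 : Fin n := ⟨1, by omega⟩ with hi1def
  have hi01 : i0 ≠ i1 := by simp [hi0def, hi1def, Fin.ext_iff]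
  -- the two averaged points
  have hPa := avg_mem hn Γ h2t z i0 a
  have hPb := avg_mem hn Γ h2t z i0 b
  rw [ha] at hPa
  rw [hb] at hPb
  -- main candidate
  set y1 : Fin n → ℤ := fun j => if j = i0 then r else q with hy1def
  have hcomb : intVec y1 =
      ((r:ℝ)/(M:ℝ)) • (WithLp.toLp 2 (fun j => if j = i0 then ((M:ℤ):ℝ)
          else (((∑ k, z k : ℤ) : ℝ) - ((M:ℤ) : ℝ)) / ((n : ℝ) - 1)) : EuclideanSpace ℝ (Fin n))
      + (1 - (r:ℝ)/(M:ℝ)) • (WithLp.toLp 2 (fun j => if j = i0 then ((0:ℤ):ℝ)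
          else (((∑ k, z k : ℤ) : ℝ) - ((0:ℤ) : ℝ)) / ((n : ℝ) - 1)) : EuclideanSpace ℝ (Fin n)) := by
    ext j
    rw [combo_apply]
    simp only [intVec, hy1def, smul_eq_mul, PiLp.toLp_apply]
    by_cases hj : j = i0
    · rw [if_pos hj, if_pos hj, if_pos hj]
      push_cast
      field_simp
      ring
    · rw [if_neg hj, if_neg hj, if_neg hj]
      rw [← hSdef]
      push_cast
      field_simp
      linear_combination ((M:ℝ)) * hqrR
  have hmem1 : intVec y1 ∈ convexHull ℝ (orbitSet Γ (intVec z)) := by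
    rw [hcomb]
    refine (convex_convexHull ℝ _) hPa hPb ?_ ?_ (by ring)
    · positivity
    · have h1 : (r:ℝ) ≤ (M:ℝ) := by exact_mod_cast hrM
      have h2 : (0:ℝ) < (M:ℝ) := by
        have : (2:ℝ) ≤ (M:ℝ) := by exact_mod_cast hM2
        linarith
      rw [sub_nonneg, div_le_one h2]
      exact h1
  by_cases hy : intVec y1 ∈ orbitSet Γ (intVec z)
  · -- degenerate case
    obtain ⟨γ, hγΓ, hEq⟩ := hy
    have hz : ∀ j, (if j = i0 then r else q) = z (γ⁻¹ j) := by
      intro j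
      have h0 := congrArg (fun v : EuclideanSpace ℝ (Fin n) => v j) hEq
      have h1 : ((if j = i0 then r else q : ℤ) : ℝ) = (z (γ⁻¹ j) : ℝ) := by
        simpa [intVec, hy1def, permAct] using h0
      exact_mod_cast h1
    have hk0 : z (γ⁻¹ i0) = r := by
      have h2 := hz i0
      rw [if_pos rfl] at h2
      exact h2.symm
    have hrest : ∀ k, k ≠ γ⁻¹ i0 → z k = q := by
      intro k hk
      have h1 : γ k ≠ i0 := by
        intro h
        exact hk (by rw [← h]; simp)
      have := hz (γ k)
      rw [if_neg h1] at this
      simpa using this.symm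
    by_cases hak : a = γ⁻¹ i0
    · -- z is M at a and 0 elsewhere
      have hq0 : q = 0 := by
        have := hrest b (by rw [← hak]; exact Ne.symm hab)
        rw [hb] at this; exact this.symm
      have hz0 : ∀ k, k ≠ a → z k = 0 := by
        intro k hk
        rw [hrest k (by rw [← hak]; exact hk), hq0]
      have hSM : (S:ℝ) = (M:ℝ) := by
        have : S = M := by
          rw [hSdef, ← Finset.add_sum_erase _ _ (Finset.mem_univ a), ha,
            Finset.sum_eq_zero (fun k hk => hz0 k (Finset.mem_erase.1 hk).1), add_zero]
        exact_mod_cast this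
      -- second candidate
      refine ⟨fun j => if j = i0 then M - 1 else if j = i1 then 1 else 0, ?_, ?_⟩
      · have hQ0 := avg_mem hn Γ h2t z i0 a
        have hQ1 := avg_mem hn Γ h2t z i1 a
        rw [ha] at hQ0 hQ1
        have hcomb2 : intVec (fun j => if j = i0 then M - 1 else if j = i1 then 1 else 0) =
            (((M:ℝ)-1)/(M:ℝ)) • (WithLp.toLp 2 (fun j => if j = i0 then ((M:ℤ):ℝ)
                else (((∑ k, z k : ℤ) : ℝ) - ((M:ℤ) : ℝ)) / ((n : ℝ) - 1)) :
                EuclideanSpace ℝ (Fin n))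
            + ((1:ℝ)/(M:ℝ)) • (WithLp.toLp 2 (fun j => if j = i1 then ((M:ℤ):ℝ)
                else (((∑ k, z k : ℤ) : ℝ) - ((M:ℤ) : ℝ)) / ((n : ℝ) - 1)) :
                EuclideanSpace ℝ (Fin n)) := by
          ext j
          rw [combo_apply]
          simp only [intVec, smul_eq_mul, ← hSdef, hSM, PiLp.toLp_apply]
          by_cases hj : j = i0
          · rw [if_pos hj, if_pos hj, if_neg (by rw [hj]; exact hi01)]
            push_cast
            field_simp
            ring
          · rw [if_neg hj, if_neg hj]
            by_cases hj1 : j = i1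
            · rw [if_pos hj1, if_pos hj1]
              push_cast
              field_simp
              ring
            · rw [if_neg hj1, if_neg hj1]
              push_cast
              field_simp
              ring
        rw [hcomb2]
        have hMR : (2:ℝ) ≤ (M:ℝ) := by exact_mod_cast hM2
        refine (convex_convexHull ℝ _) hQ0 hQ1 ?_ ?_ (by field_simp; ring)
        · exact div_nonneg (by linarith) (by linarith)
        · exact div_nonneg zero_le_one (by linarith)
      · rintro ⟨γ', -, hEq'⟩
        have hval : ((1:ℤ):ℝ) = (z (γ'⁻¹ i1) : ℝ) := by
          have := congrArg (fun v : EuclideanSpace ℝ (Fin n) => v i1) hEq'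
          simpa [intVec, permAct, if_neg (Ne.symm hi01)] using this
        have hval' : z (γ'⁻¹ i1) = 1 := by exact_mod_cast hval.symm
        by_cases h : γ'⁻¹ i1 = a
        · rw [h, ha] at hval'; omega
        · rw [hz0 _ h] at hval'; omega
    · -- z is 0 at b and M elsewhere
      have hqM : q = M := by
        have := hrest a hak
        rw [ha] at this; exact this.symm
      have hbk : b = γ⁻¹ i0 := by
        by_contra h
        have := hrest b h
        rw [hb] at this
        omega
      have hzM : ∀ k, k ≠ b → z k = M := by
        intro k hk
        rw [hrest k (by rw [← hbk]; exact hk), hqM]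
      have hSM : (S:ℝ) = ((n:ℝ) - 1) * (M:ℝ) := by
        have h1 : S = ((n:ℤ) - 1) * M := by
          rw [hSdef, ← Finset.add_sum_erase _ _ (Finset.mem_univ b), hb,
            Finset.sum_congr rfl (fun k hk => hzM k (Finset.mem_erase.1 hk).1),
            Finset.sum_const, zero_add, Finset.card_erase_of_mem (Finset.mem_univ b),
            Finset.card_univ, Fintype.card_fin, nsmul_eq_mul]
          push_cast [show 1 ≤ n by omega]
          ring
        rw [show (S:ℝ) = (((((n:ℤ) - 1) * M : ℤ)):ℝ) by exact_mod_cast congrArg Int.cast h1]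
        push_cast
        ring
      refine ⟨fun j => if j = i0 then 1 else if j = i1 then M - 1 else M, ?_, ?_⟩
      · have hQ0 := avg_mem hn Γ h2t z i0 b
        have hQ1 := avg_mem hn Γ h2t z i1 b
        rw [hb] at hQ0 hQ1
        have hcomb2 : intVec (fun j => if j = i0 then 1 else if j = i1 then M - 1 else M) =
            (((M:ℝ)-1)/(M:ℝ)) • (WithLp.toLp 2 (fun j => if j = i0 then ((0:ℤ):ℝ)
                else (((∑ k, z k : ℤ) : ℝ) - ((0:ℤ) : ℝ)) / ((n : ℝ) - 1)) :
                EuclideanSpace ℝ (Fin n))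
            + ((1:ℝ)/(M:ℝ)) • (WithLp.toLp 2 (fun j => if j = i1 then ((0:ℤ):ℝ)
                else (((∑ k, z k : ℤ) : ℝ) - ((0:ℤ) : ℝ)) / ((n : ℝ) - 1)) :
                EuclideanSpace ℝ (Fin n)) := by
          ext j
          rw [combo_apply]
          simp only [intVec, smul_eq_mul, ← hSdef, hSM, PiLp.toLp_apply]
          by_cases hj : j = i0
          · rw [if_pos hj, if_pos hj, if_neg (by rw [hj]; exact hi01)]
            push_cast
            field_simp
            ring
          · rw [if_neg hj, if_neg hj]
            by_cases hj1 : j = i1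
            · rw [if_pos hj1, if_pos hj1]
              push_cast
              field_simp
              ring
            · rw [if_neg hj1, if_neg hj1]
              push_cast
              field_simp
              ring
        rw [hcomb2]
        have hMR : (2:ℝ) ≤ (M:ℝ) := by exact_mod_cast hM2
        refine (convex_convexHull ℝ _) hQ0 hQ1 ?_ ?_ (by field_simp; ring)
        · exact div_nonneg (by linarith) (by linarith)
        · exact div_nonneg zero_le_one (by linarith)
      · rintro ⟨γ', -, hEq'⟩
        have hval : ((1:ℤ):ℝ) = (z (γ'⁻¹ i0) : ℝ) := by
          have := congrArg (fun v : EuclideanSpace ℝ (Fin n) => v i0) hEq'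
          simpa [intVec, permAct] using this
        have hval' : z (γ'⁻¹ i0) = 1 := by exact_mod_cast hval.symm
        by_cases h : γ'⁻¹ i0 = b
        · rw [h, hb] at hval'; omega
        · rw [hzM _ h] at hval'; omega
  · exact ⟨y1, hmem1, hy⟩
end
end

section
/- Let Γ ≤ S_n be a 2-transitive permutation group with n ≥ 4. Then every core point z with respect to Γ satisfies bw(z) := max_i z_i − min_i z_i ≤ n − 3. -/
noncomputable section

open scoped RealInnerProductSpace

lemma esum_apply {n : ℕ} {ι : Type*} (s : Finset ι) (f : ι → EuclideanSpace ℝ (Fin n))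
    (c : Fin n) : (∑ i ∈ s, f i) c = ∑ i ∈ s, f i c := by
  induction s using Finset.cons_induction with
  | empty => rfl
  | cons a s ha ih => rw [Finset.sum_cons, Finset.sum_cons, ← ih]; rfl

lemma esmul_apply {n : ℕ} (r : ℝ) (f : EuclideanSpace ℝ (Fin n)) (c : Fin n) :
    (r • f) c = r * f c := rfl

lemma spike_mem {n : ℕ} (hn : 2 ≤ n) (Γ : Subgroup (Equiv.Perm (Fin n)))
    (h2t : ∀ x1 x2 y1 y2 : Fin n, x1 ≠ x2 → y1 ≠ y2 →
      ∃ γ ∈ Γ, γ x1 = y1 ∧ γ x2 = y2)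
    (x : EuclideanSpace ℝ (Fin n)) (i a : Fin n) :
    (show EuclideanSpace ℝ (Fin n) from
      WithLp.toLp 2 (fun c => if c = a then x i else (∑ q, x q - x i) / ((n : ℝ) - 1))) ∈
      convexHull ℝ (orbitSet Γ x) := by
  classical
  have hnR : (0:ℝ) < (n:ℝ) - 1 := by
    have : (2:ℝ) ≤ (n:ℝ) := by exact_mod_cast hn
    linarith
  have hnt : Nontrivial (Fin n) := Fin.nontrivial_iff_two_le.mpr hn
  set T : Finset (Equiv.Perm (Fin n)) :=
    Finset.univ.filter (fun γ => γ ∈ Γ ∧ γ i = a) with hTdef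
  -- T is nonempty
  obtain ⟨i2, hi2⟩ := exists_ne i
  obtain ⟨a2, ha2⟩ := exists_ne a
  obtain ⟨γ0, hγ0Γ, hγ0i, -⟩ := h2t i i2 a a2 (Ne.symm hi2) (Ne.symm ha2)
  have hTne : T.Nonempty := ⟨γ0, by simp [hTdef, hγ0Γ, hγ0i]⟩
  have hTcard : (0:ℝ) < (T.card : ℝ) := by
    exact_mod_cast Finset.card_pos.mpr hTne
  -- the fiber Finsets
  set F : Fin n → Fin n → Finset (Equiv.Perm (Fin n)) :=
    fun q c => Finset.univ.filter (fun γ => (γ ∈ Γ ∧ γ i = a) ∧ γ q = c) with hFdef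
  -- all fibers with fixed q ≠ i and target ≠ a have the same cardinality
  have cardF_eq : ∀ q : Fin n, ∀ c1 c2 : Fin n, c1 ≠ a → c2 ≠ a →
      (F q c1).card = (F q c2).card := by
    intro q c1 c2 hc1 hc2
    obtain ⟨δ, hδΓ, hδa, hδc⟩ := h2t a c1 a c2 (Ne.symm hc1) (Ne.symm hc2)
    apply Finset.card_bij (fun γ _ => δ * γ)
    · intro γ hγ
      simp only [hFdef, Finset.mem_filter, Finset.mem_univ, true_and] at hγ ⊢
      obtain ⟨⟨h1, h2⟩, h3⟩ := hγ
      refine ⟨⟨Γ.mul_mem hδΓ h1, ?_⟩, ?_⟩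
      · simp [Equiv.Perm.mul_apply, h2, hδa]
      · simp [Equiv.Perm.mul_apply, h3, hδc]
    · intro γ1 h1 γ2 h2 heq
      exact mul_left_cancel heq
    · intro γ' hγ'
      simp only [hFdef, Finset.mem_filter, Finset.mem_univ, true_and] at hγ'
      obtain ⟨⟨h1, h2⟩, h3⟩ := hγ'
      refine ⟨δ⁻¹ * γ', ?_, by group⟩
      simp only [hFdef, Finset.mem_filter, Finset.mem_univ, true_and]
      refine ⟨⟨Γ.mul_mem (Γ.inv_mem hδΓ) h1, ?_⟩, ?_⟩
      · simp only [Equiv.Perm.mul_apply, h2]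
        rw [Equiv.Perm.inv_eq_iff_eq]; exact hδa.symm
      · simp only [Equiv.Perm.mul_apply, h3]
        rw [Equiv.Perm.inv_eq_iff_eq]; exact hδc.symm
  -- for q ≠ i the fibers partition T
  have cardT : ∀ q : Fin n, q ≠ i → ∀ c : Fin n, c ≠ a →
      T.card = (n - 1) * (F q c).card := by
    intro q hq c hc
    have hmaps : ∀ γ ∈ T, γ q ∈ Finset.univ.erase a := by
      intro γ hγ
      simp only [hTdef, Finset.mem_filter, Finset.mem_univ, true_and] at hγ
      refine Finset.mem_erase.mpr ⟨fun h => hq ?_, Finset.mem_univ _⟩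
      exact γ.injective (by rw [h, hγ.2])
    have := Finset.card_eq_sum_card_fiberwise hmaps
    rw [this]
    have hrw : ∀ c' ∈ Finset.univ.erase a,
        (T.filter (fun γ => γ q = c')).card = (F q c).card := by
      intro c' hc'
      have : T.filter (fun γ => γ q = c') = F q c' := by
        simp [hTdef, hFdef, Finset.filter_filter]
      rw [this]
      exact cardF_eq q c' c (Finset.mem_erase.mp hc').1 hc
    rw [Finset.sum_congr rfl hrw, Finset.sum_const, Finset.card_erase_of_mem (Finset.mem_univ a),
      Finset.card_univ, Fintype.card_fin, smul_eq_mul]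
  -- key: the sum over T of x (γ⁻¹ c) for c ≠ a
  have key : ∀ c : Fin n, c ≠ a →
      ∑ γ ∈ T, x (γ⁻¹ c) = (T.card : ℝ) * ((∑ q, x q - x i) / ((n : ℝ) - 1)) := by
    intro c hc
    have hmaps : ∀ γ ∈ T, γ⁻¹ c ∈ Finset.univ.erase i := by
      intro γ hγ
      simp only [hTdef, Finset.mem_filter, Finset.mem_univ, true_and] at hγ
      refine Finset.mem_erase.mpr ⟨fun h => hc ?_, Finset.mem_univ _⟩
      rw [← hγ.2, ← h]
      simp
    rw [← Finset.sum_fiberwise_of_maps_to hmaps (fun γ => x (γ⁻¹ c))]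
    have hinner : ∀ q ∈ Finset.univ.erase i,
        ∑ γ ∈ T.filter (fun γ => γ⁻¹ c = q), x (γ⁻¹ c)
          = ((F q c).card : ℝ) * x q := by
      intro q hq
      have hflt : T.filter (fun γ => γ⁻¹ c = q) = F q c := by
        simp only [hTdef, hFdef, Finset.filter_filter]
        apply Finset.filter_congr
        intro γ _
        constructor
        · rintro ⟨h1, h2⟩; exact ⟨h1, by rw [← h2]; simp⟩
        · rintro ⟨h1, h2⟩; exact ⟨h1, by rw [← h2]; simp⟩
      rw [hflt]
      have hxq : ∀ γ ∈ F q c, x (γ⁻¹ c) = x q := by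
        intro γ hγ
        have h3 : γ q = c := by
          simp only [hFdef, Finset.mem_filter] at hγ
          exact hγ.2.2
        rw [← h3, ← Equiv.Perm.mul_apply, inv_mul_cancel, Equiv.Perm.one_apply]
      rw [Finset.sum_congr rfl hxq, Finset.sum_const, nsmul_eq_mul]
    rw [Finset.sum_congr rfl hinner]
    have hcards : ∀ q ∈ Finset.univ.erase i,
        ((F q c).card : ℝ) * x q = (T.card : ℝ) / ((n:ℝ) - 1) * x q := by
      intro q hq
      have hTc := cardT q (Finset.mem_erase.mp hq).1 c hc
      have : ((T.card : ℝ)) = ((n:ℝ) - 1) * ((F q c).card : ℝ) := by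
        rw [hTc]
        push_cast
        have hn1 : 1 ≤ n := le_trans (by norm_num) hn
        push_cast [Nat.cast_sub hn1]
        ring
      rw [this]
      field_simp
    rw [Finset.sum_congr rfl hcards, ← Finset.mul_sum,
      Finset.sum_erase_eq_sub (Finset.mem_univ i)]
    field_simp
  -- now assemble the center of mass
  have hmem : ∀ γ ∈ T, permAct γ x ∈ convexHull ℝ (orbitSet Γ x) := by
    intro γ hγ
    apply subset_convexHull
    simp only [hTdef, Finset.mem_filter] at hγ
    exact ⟨γ, hγ.2.1, rfl⟩
  have hw1 : ∑ _γ ∈ T, (T.card : ℝ)⁻¹ = 1 := by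
    rw [Finset.sum_const, nsmul_eq_mul]
    field_simp
  have hfinal := (convex_convexHull ℝ (orbitSet Γ x)).sum_mem
    (fun γ _ => by positivity) hw1 hmem
  convert hfinal using 1
  ext c
  show (if c = a then x i else (∑ q, x q - x i) / ((n : ℝ) - 1)) = _
  rw [esum_apply]
  by_cases hca : c = a
  · subst hca
    have : ∀ γ ∈ T, ((T.card : ℝ)⁻¹ • permAct γ x) c = (T.card : ℝ)⁻¹ * x i := by
      intro γ hγ
      simp only [hTdef, Finset.mem_filter] at hγ
      rw [esmul_apply]
      congr 1
      show x (γ⁻¹ c) = x i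
      rw [← hγ.2.2, ← Equiv.Perm.mul_apply, inv_mul_cancel, Equiv.Perm.one_apply]
    rw [Finset.sum_congr rfl this, Finset.sum_const, nsmul_eq_mul]
    simp only [if_pos rfl]
    field_simp
    simp
  · have : ∀ γ ∈ T, ((T.card : ℝ)⁻¹ • permAct γ x) c = (T.card : ℝ)⁻¹ * x (γ⁻¹ c) := by
      intro γ _
      rw [esmul_apply]
      rfl
    rw [Finset.sum_congr rfl this, ← Finset.mul_sum, key c hca, if_neg hca]
    field_simp

lemma comb_mem {n : ℕ} (hn : 2 ≤ n) (Γ : Subgroup (Equiv.Perm (Fin n)))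
    (h2t : ∀ x1 x2 y1 y2 : Fin n, x1 ≠ x2 → y1 ≠ y2 →
      ∃ γ ∈ Γ, γ x1 = y1 ∧ γ x2 = y2)
    (x : EuclideanSpace ℝ (Fin n)) (p : Fin n) (u : Fin n → ℝ)
    (husum : ∑ c, u c = ∑ c, x c)
    (hne : x p ≠ (∑ q, x q - x p) / ((n : ℝ) - 1))
    (hsign : ∀ a, 0 ≤ (u a - (∑ q, x q - x p) / ((n : ℝ) - 1)) /
      (x p - (∑ q, x q - x p) / ((n : ℝ) - 1))) :
    (show EuclideanSpace ℝ (Fin n) from WithLp.toLp 2 u) ∈ convexHull ℝ (orbitSet Γ x) := by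
  classical
  have hnR : (0:ℝ) < (n:ℝ) - 1 := by
    have : (2:ℝ) ≤ (n:ℝ) := by exact_mod_cast hn
    linarith
  set B : ℝ := (∑ q, x q - x p) / ((n : ℝ) - 1) with hB
  have hBden : B * ((n:ℝ) - 1) = ∑ q, x q - x p := by
    rw [hB]; field_simp
  have hxpB : x p - B ≠ 0 := sub_ne_zero.mpr hne
  set lam : Fin n → ℝ := fun a => (u a - B) / (x p - B) with hlam
  have hsum1 : ∑ a, lam a = 1 := by
    rw [hlam]
    rw [← Finset.sum_div]
    rw [Finset.sum_sub_distrib, Finset.sum_const, Finset.card_univ, Fintype.card_fin,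
      nsmul_eq_mul, husum]
    rw [div_eq_one_iff_eq hxpB]
    have : (n:ℝ) * B = B * ((n:ℝ) - 1) + B := by ring
    rw [this, hBden]
    ring
  have hmem := (convex_convexHull ℝ (orbitSet Γ x)).sum_mem
    (t := Finset.univ) (fun a _ => hsign a) hsum1
    (fun a _ => spike_mem hn Γ h2t x p a)
  convert hmem using 1
  ext c
  show u c = _
  rw [esum_apply]
  have hterm : ∀ a ∈ Finset.univ (α := Fin n),
      (lam a • (show EuclideanSpace ℝ (Fin n) from
        WithLp.toLp 2 (fun c' => if c' = a then x p else B))) c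
      = lam a * B + (if c = a then lam a * (x p - B) else 0) := by
    intro a _
    rw [esmul_apply]
    show lam a * (if c = a then x p else B) = _
    split_ifs with h
    · ring
    · ring
  rw [Finset.sum_congr rfl hterm, Finset.sum_add_distrib, ← Finset.sum_mul, hsum1,
    Finset.sum_ite_eq, if_pos (Finset.mem_univ c)]
  rw [hlam]
  field_simp
  ring

lemma count_lt {n k : ℕ} (hk : k ≤ n) :
    (∑ a : Fin n, (if (a : ℕ) < k then (1:ℤ) else 0)) = k := by
  classical
  rw [Fin.sum_univ_eq_sum_range (fun m => if m < k then (1:ℤ) else 0)]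
  rw [Finset.sum_ite, Finset.sum_const, Finset.sum_const]
  have : (Finset.range n).filter (fun m => m < k) = Finset.range k := by
    ext m
    simp only [Finset.mem_filter, Finset.mem_range]
    omega
  rw [this]
  simp

lemma case_split {n D S' q0 r : ℤ} (hn : 4 ≤ n) (hD : n - 2 ≤ D)
    (hSle : S' ≤ (n - 1) * D) (hqr : S' = n * q0 + r) (hr0 : 0 ≤ r) (hrn : r < n) :
    r * (n - 1) ≤ n * D - S' ∨ (n - r) * (n - 1) ≤ S' := by
  by_contra hcon
  push_neg at hcon
  obtain ⟨h1, h2⟩ := hcon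
  -- n * D < r * (n-1) + S' and S' < (n-r)*(n-1), sum: n*D < n*(n-1) so D ≤ n-2, hence D = n-2
  have hn0 : (0:ℤ) < n := by omega
  have hDn : D < n - 1 := by nlinarith
  have hDeq : D = n - 2 := le_antisymm (by omega) hD
  subst hDeq
  -- from h1 : n*(n-2) - S' < r*(n-1), S' = n q0 + r : n-1 ≤ q0 + r
  have key1 : n - 1 ≤ q0 + r := by nlinarith
  have key2 : q0 + r < n - 1 := by nlinarith
  omega


set_option maxHeartbeats 2000000 in
theorem stmt6 {n : ℕ} (hn : 4 ≤ n) (Γ : Subgroup (Equiv.Perm (Fin n)))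
    (h2t : ∀ x1 x2 y1 y2 : Fin n, x1 ≠ x2 → y1 ≠ y2 →
      ∃ γ ∈ Γ, γ x1 = y1 ∧ γ x2 = y2)
    (z : Fin n → ℤ) (hcore : IsCorePoint Γ z) :
    ∀ i j : Fin n, z i - z j ≤ (n : ℤ) - 3 := by
  classical
  by_contra hcon
  push_neg at hcon
  obtain ⟨i0, j0, hij0⟩ := hcon
  have hn2 : 2 ≤ n := by omega
  have hnZ : (4:ℤ) ≤ (n:ℤ) := by exact_mod_cast hn
  have hn0 : (0:ℤ) < (n:ℤ) := by omega
  have hnR : (0:ℝ) < (n:ℝ) - 1 := by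
    have : (2:ℝ) ≤ (n:ℝ) := by exact_mod_cast hn2
    linarith
  obtain ⟨i, -, hi⟩ := Finset.exists_max_image (Finset.univ : Finset (Fin n)) z
    ⟨i0, Finset.mem_univ _⟩
  obtain ⟨j, -, hj⟩ := Finset.exists_min_image (Finset.univ : Finset (Fin n)) z
    ⟨j0, Finset.mem_univ _⟩
  set m0 := z j with hm0
  set M0 := z i with hM0
  set D := M0 - m0 with hDdef
  have hD : (n:ℤ) - 2 ≤ D := by
    have h1 := hi i0 (Finset.mem_univ _)
    have h2 := hj j0 (Finset.mem_univ _)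
    omega
  set Sz : ℤ := ∑ q, z q with hSz
  set S' : ℤ := Sz - n * m0 with hS'
  have hS'sum : S' = ∑ q, (z q - m0) := by
    rw [hS', hSz, Finset.sum_sub_distrib, Finset.sum_const, Finset.card_univ, Fintype.card_fin,
      nsmul_eq_mul]
  have hboundq : ∀ q, z q - m0 ≤ D := fun q => by
    have := hi q (Finset.mem_univ _); omega
  have hnonneg : ∀ q, 0 ≤ z q - m0 := fun q => by
    have := hj q (Finset.mem_univ _); omega
  have hSle : S' ≤ ((n:ℤ) - 1) * D := by
    rw [hS'sum, ← Finset.sum_erase_add _ _ (Finset.mem_univ j)]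
    have h1 : ∑ q ∈ Finset.univ.erase j, (z q - m0) ≤ ((n:ℤ) - 1) * D := by
      have := Finset.sum_le_card_nsmul (Finset.univ.erase j) (fun q => z q - m0) D
        (fun q _ => hboundq q)
      rw [Finset.card_erase_of_mem (Finset.mem_univ j), Finset.card_univ,
        Fintype.card_fin, nsmul_eq_mul] at this
      have hcast : ((n - 1 : ℕ) : ℤ) = (n:ℤ) - 1 := by omega
      rw [hcast] at this
      exact this
    have h2 : z j - m0 = 0 := by omega
    omega
  have hS'ge : D ≤ S' := by
    rw [hS'sum, hDdef, hM0]
    have : z i - m0 ≤ ∑ q, (z q - m0) :=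
      Finset.single_le_sum (fun q _ => hnonneg q) (Finset.mem_univ i)
    exact this
  set q0 := S' / n with hq0def
  set r := S' % n with hrdef
  have hqr : S' = n * q0 + r := (Int.mul_ediv_add_emod S' (n:ℤ)).symm
  have hr0 : 0 ≤ r := Int.emod_nonneg _ (by omega)
  have hrn : r < n := Int.emod_lt_of_pos _ hn0
  have hS'0 : 0 < S' := by omega
  have hq00 : 0 ≤ q0 := Int.ediv_nonneg (by omega) (by omega)
  clear_value m0 M0 D Sz S' q0 r
  -- the balanced integer vector
  set uz : Fin n → ℤ := fun a => m0 + q0 + (if (a:ℕ) < r.toNat then 1 else 0) with huzdef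
  have hrtn : (r.toNat : ℤ) = r := Int.toNat_of_nonneg hr0
  have hrtn' : r.toNat ≤ n := by omega
  have husz : ∑ a, uz a = Sz := by
    rw [huzdef, Finset.sum_add_distrib, Finset.sum_const, Finset.card_univ, Fintype.card_fin,
      nsmul_eq_mul, count_lt hrtn']
    rw [hrtn]
    have : Sz = n * q0 + r + n * m0 := by omega
    rw [this]; ring
  have huz_lb : ∀ a, m0 + q0 ≤ uz a := fun a => by
    simp only [huzdef]; split_ifs <;> omega
  have huz_ub : ∀ a, uz a ≤ m0 + q0 + 1 := fun a => by
    simp only [huzdef]; split_ifs <;> omega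
  clear_value uz
  -- cast helpers
  have hsumx : (∑ q, (intVec z) q) = ((Sz:ℤ) : ℝ) := by
    rw [hSz]; push_cast [intVec]; rfl
  have husumR : (∑ c, ((uz c : ℤ) : ℝ)) = ((Sz:ℤ) : ℝ) := by
    rw [← husz]; push_cast; rfl
  -- membership of the balanced vector in the convex hull
  have hmem : intVec uz ∈ convexHull ℝ (orbitSet Γ (intVec z)) := by
    rcases case_split hnZ hD hSle hqr hr0 hrn with h1 | h2
    · -- up-spikes at i
      have hrD : r + q0 ≤ D := by
        have : r * (n:ℤ) ≤ n * D - n * q0 := by nlinarith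
        nlinarith
      have hZ2 : Sz - M0 ≤ (m0 + q0) * ((n:ℤ) - 1) := by nlinarith
      have hZ1 : Sz < (n:ℤ) * M0 := by nlinarith
      have hBlt : ((Sz:ℤ):ℝ) - ((M0:ℤ):ℝ) < ((M0:ℤ):ℝ) * ((n:ℝ) - 1) := by
        have : ((Sz:ℤ):ℝ) < ((n:ℤ):ℝ) * ((M0:ℤ):ℝ) := by exact_mod_cast hZ1
        push_cast at this ⊢
        nlinarith
      have hxi : (intVec z) i = ((M0:ℤ):ℝ) := by rw [hM0]; rfl
      have hBpos : (∑ q, (intVec z) q - (intVec z) i) / ((n : ℝ) - 1) < (intVec z) i := by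
        rw [hsumx, hxi, div_lt_iff₀ hnR]
        linarith
      apply comb_mem hn2 Γ h2t (intVec z) i (fun a => ((uz a : ℤ) : ℝ))
      · rw [husumR, hsumx]
      · exact ne_of_gt hBpos
      · intro a
        apply div_nonneg _ (by linarith)
        rw [hsumx, hxi]
        have h1' : ((m0:ℤ):ℝ) + ((q0:ℤ):ℝ) ≤ ((uz a : ℤ):ℝ) := by
          exact_mod_cast huz_lb a
        have h2' : (((Sz:ℤ):ℝ) - ((M0:ℤ):ℝ)) ≤ (((m0:ℤ):ℝ) + ((q0:ℤ):ℝ)) * ((n:ℝ) - 1) := by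
          have hc : ((Sz - M0 : ℤ) : ℝ) ≤ (((m0 + q0) * ((n:ℤ) - 1) : ℤ) : ℝ) := by
            exact_mod_cast hZ2
          push_cast at hc ⊢
          linarith
        show (0:ℝ) ≤ ((uz a:ℤ):ℝ) - (((Sz:ℤ):ℝ) - ((M0:ℤ):ℝ)) / ((n:ℝ) - 1)
        rw [sub_nonneg, div_le_iff₀ hnR]
        nlinarith [h1', h2']
    · -- down-spikes at j
      have hq0r : (n:ℤ) - 1 - r ≤ q0 := by
        have : (n:ℤ) * ((n:ℤ) - 1 - r) ≤ n * q0 := by nlinarith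
        nlinarith
      have hZ3 : ∀ a, uz a * ((n:ℤ) - 1) ≤ Sz - m0 := by
        intro a
        have hub := huz_ub a
        have hlb := huz_lb a
        have h5 : Sz - m0 = S' + ((n:ℤ) - 1) * m0 := by linear_combination -hS'
        -- two subcases depending on the indicator
        rcases le_or_gt (uz a) (m0 + q0) with hcase' | hcase'
        · nlinarith
        · have : uz a = m0 + q0 + 1 := by omega
          -- indicator is 1, so r.toNat > 0 is possible; need (q0+1)(n-1) ≤ S'
          nlinarith
      have hZ4 : (n:ℤ) * m0 < Sz := by omega
      have hxj : (intVec z) j = ((m0:ℤ):ℝ) := by rw [hm0]; rfl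
      have hBneg : (intVec z) j < (∑ q, (intVec z) q - (intVec z) j) / ((n : ℝ) - 1) := by
        rw [hsumx, hxj, lt_div_iff₀ hnR]
        have : ((n:ℤ) * m0 : ℝ) < ((Sz:ℤ):ℝ) := by exact_mod_cast hZ4
        push_cast at this ⊢
        nlinarith
      apply comb_mem hn2 Γ h2t (intVec z) j (fun a => ((uz a : ℤ) : ℝ))
      · rw [husumR, hsumx]
      · exact ne_of_lt hBneg
      · intro a
        rw [div_nonneg_iff]
        right
        constructor
        · rw [hsumx, hxj]
          have h3' : ((uz a * ((n:ℤ)-1) : ℤ) : ℝ) ≤ ((Sz - m0 : ℤ) : ℝ) := by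
            exact_mod_cast hZ3 a
          push_cast at h3'
          show ((uz a:ℤ):ℝ) - (((Sz:ℤ):ℝ) - ((m0:ℤ):ℝ)) / ((n:ℝ) - 1) ≤ 0
          rw [sub_nonpos, le_div_iff₀ hnR]
          linarith
        · linarith
  -- now use the core point property
  have horb := hcore uz hmem
  obtain ⟨γ, hγΓ, heq⟩ := horb
  have hval : ∀ c : Fin n, uz (γ c) = z c := by
    intro c
    have h := congrFun (congrArg WithLp.ofLp heq) (γ c)
    have h2 : intVec uz (γ c) = intVec z c := by
      rw [h]
      show (intVec z) (γ⁻¹ (γ c)) = intVec z c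
      rw [← Equiv.Perm.mul_apply, inv_mul_cancel, Equiv.Perm.one_apply]
    have h3 : ((uz (γ c) : ℤ) : ℝ) = ((z c : ℤ) : ℝ) := h2
    exact_mod_cast h3
  have hvi := hval i
  have hvj := hval j
  have h1 := huz_ub (γ i)
  have h2 := huz_lb (γ j)
  omega
end
end

section
/- Let Γ ≤ S_n be a permutation group, V an invariant subspace of Γ, and z ∈ Z^n with Σ_i z_i = k. Assume z has locally minimal projection onto V, meaning ‖π_V(z)‖ ≤ ‖π_V(z')‖ for all integral z' with Σ_i z'_i = k and ‖z'‖ ≤ ‖z‖. Then z is a core point for Γ if and only if z is a core point for the stabilizer subgroup stab_Γ(π_V(z)). -/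
noncomputable section

open scoped RealInnerProductSpace

/-! ### Auxiliary lemmas -/

lemma permAct_mul' {n : ℕ} (a b : Equiv.Perm (Fin n)) (x : EuclideanSpace ℝ (Fin n)) :
    permAct (a * b) x = permAct a (permAct b x) := rfl

lemma permAct_one' {n : ℕ} (x : EuclideanSpace ℝ (Fin n)) : permAct 1 x = x := rfl

lemma permAct_inv_cancel {n : ℕ} (γ : Equiv.Perm (Fin n)) (x : EuclideanSpace ℝ (Fin n)) :
    permAct γ⁻¹ (permAct γ x) = x := by
  rw [← permAct_mul', inv_mul_cancel, permAct_one']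

lemma permAct_cancel_inv {n : ℕ} (γ : Equiv.Perm (Fin n)) (x : EuclideanSpace ℝ (Fin n)) :
    permAct γ (permAct γ⁻¹ x) = x := by
  rw [← permAct_mul', mul_inv_cancel, permAct_one']

/-- `permAct γ` as a linear map. -/
def permLin {n : ℕ} (γ : Equiv.Perm (Fin n)) :
    EuclideanSpace ℝ (Fin n) →ₗ[ℝ] EuclideanSpace ℝ (Fin n) where
  toFun := permAct γ
  map_add' := fun _ _ => rfl
  map_smul' := fun _ _ => rfl

lemma permLin_apply {n : ℕ} (γ : Equiv.Perm (Fin n)) (x : EuclideanSpace ℝ (Fin n)) :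
    permLin γ x = permAct γ x := rfl

lemma inner_permAct {n : ℕ} (γ : Equiv.Perm (Fin n)) (x y : EuclideanSpace ℝ (Fin n)) :
    ⟪permAct γ x, permAct γ y⟫ = ⟪x, y⟫ := by
  simp only [PiLp.inner_apply, RCLike.inner_apply, conj_trivial, permAct]
  exact Equiv.sum_comp γ⁻¹ (fun i => y i * x i)

lemma inner_permAct_left {n : ℕ} (γ : Equiv.Perm (Fin n)) (x w : EuclideanSpace ℝ (Fin n)) :
    ⟪permAct γ x, w⟫ = ⟪x, permAct γ⁻¹ w⟫ := by
  conv_lhs => rw [← permAct_cancel_inv γ w]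
  rw [inner_permAct]

lemma sum_coords_eq_inner {n : ℕ} (x : EuclideanSpace ℝ (Fin n)) :
    ⟪x, allOnes n⟫ = ∑ i, x i := by
  simp [PiLp.inner_apply, allOnes]

/-- Orthogonal projection commutes with permutations preserving `V`. -/
lemma proj_comm {n : ℕ} {Γ : Subgroup (Equiv.Perm (Fin n))}
    {V : Submodule ℝ (EuclideanSpace ℝ (Fin n))}
    (hV : ∀ γ ∈ Γ, ∀ v ∈ V, permAct γ v ∈ V) {γ : Equiv.Perm (Fin n)} (hγ : γ ∈ Γ)
    (x : EuclideanSpace ℝ (Fin n)) :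
    (V.orthogonalProjectionOnto (permAct γ x) : EuclideanSpace ℝ (Fin n)) =
      permAct γ (V.orthogonalProjectionOnto x) := by
  show V.starProjection (permAct γ x) = _
  apply V.eq_starProjection_of_mem_of_inner_eq_zero
  · exact hV γ hγ _ (V.orthogonalProjectionOnto x).2
  · intro w hw
    have hsub : permAct γ x - permAct γ (V.orthogonalProjectionOnto x) =
        permAct γ (x - V.orthogonalProjectionOnto x) := (map_sub (permLin γ) _ _).symm
    rw [hsub, inner_permAct_left]
    exact V.starProjection_inner_eq_zero x _ (hV γ⁻¹ (Γ.inv_mem hγ) w hw)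

/-- Strict convexity: a convex combination of points of norm `r` having norm at least `r`
forces every point with positive weight to equal the combination. -/
lemma combo_eq_of_norm {n : ℕ} {ι : Type*} (t : Finset ι) (w : ι → ℝ)
    (p : ι → EuclideanSpace ℝ (Fin n)) (r : ℝ)
    (hw0 : ∀ i ∈ t, 0 ≤ w i) (hw1 : ∑ i ∈ t, w i = 1)
    (hp : ∀ i ∈ t, ‖p i‖ = r)
    (hx : r ≤ ‖∑ i ∈ t, w i • p i‖) :
    ∀ i ∈ t, 0 < w i → p i = ∑ i ∈ t, w i • p i := by
  set x := ∑ i ∈ t, w i • p i with hxdef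
  have hle : ‖x‖ ≤ r := by
    calc ‖x‖ ≤ ∑ i ∈ t, ‖w i • p i‖ := norm_sum_le _ _
    _ = ∑ i ∈ t, w i * r := by
        refine Finset.sum_congr rfl fun i hi => ?_
        rw [norm_smul, Real.norm_eq_abs, abs_of_nonneg (hw0 i hi), hp i hi]
    _ = r := by rw [← Finset.sum_mul, hw1, one_mul]
  have hnx : ‖x‖ = r := le_antisymm hle hx
  have hr0 : 0 ≤ r := hnx ▸ norm_nonneg x
  have hinner : ∑ i ∈ t, w i * ⟪x, p i⟫ = r ^ 2 := by
    have : ⟪x, x⟫ = ∑ i ∈ t, w i * ⟪x, p i⟫ := by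
      conv_lhs => rw [hxdef]
      rw [inner_sum]
      exact Finset.sum_congr rfl fun i hi => real_inner_smul_right _ _ _
    rw [← this, real_inner_self_eq_norm_sq, hnx]
  have hterm : ∀ i ∈ t, w i * (r ^ 2 - ⟪x, p i⟫) = 0 := by
    have hsum0 : ∑ i ∈ t, w i * (r ^ 2 - ⟪x, p i⟫) = 0 := by
      simp only [mul_sub]
      rw [Finset.sum_sub_distrib, hinner, ← Finset.sum_mul, hw1, one_mul, sub_self]
    refine (Finset.sum_eq_zero_iff_of_nonneg fun i hi => ?_).mp hsum0
    have hcs : ⟪x, p i⟫ ≤ ‖x‖ * ‖p i‖ := real_inner_le_norm _ _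
    rw [hnx, hp i hi] at hcs
    have : 0 ≤ r ^ 2 - ⟪x, p i⟫ := by nlinarith
    exact mul_nonneg (hw0 i hi) this
  intro i hi hwi
  have h2 : ⟪x, p i⟫ = r ^ 2 := by
    have := hterm i hi
    rcases mul_eq_zero.mp this with h | h
    · exact absurd h (ne_of_gt hwi)
    · linarith
  rcases eq_or_lt_of_le hr0 with h0 | h0
  · have hx0 : x = 0 := by
      rw [← norm_eq_zero, hnx, ← h0]
    have hp0 : p i = 0 := by
      rw [← norm_eq_zero, hp i hi, ← h0]
    rw [hx0, hp0]
  · have heq : ⟪x, p i⟫ = ‖x‖ * ‖p i‖ := by rw [hnx, hp i hi]; nlinarith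
    have := inner_eq_norm_mul_iff_real.mp heq
    rw [hnx, hp i hi] at this
    symm
    exact smul_right_injective _ (ne_of_gt h0) this

lemma sum_permAct {n : ℕ} (γ : Equiv.Perm (Fin n)) (x : EuclideanSpace ℝ (Fin n)) :
    ∑ i, permAct γ x i = ∑ i, x i := Equiv.sum_comp γ⁻¹ x

lemma permAct_intVec {n : ℕ} (γ : Equiv.Perm (Fin n)) (y : Fin n → ℤ) :
    permAct γ⁻¹ (intVec y) = intVec (fun i => y (γ i)) := by
  ext i
  simp [permAct, intVec]
  rfl

lemma permAct_sum {n : ℕ} {ι : Type*} (γ : Equiv.Perm (Fin n)) (t : Finset ι)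
    (f : ι → EuclideanSpace ℝ (Fin n)) :
    permAct γ (∑ i ∈ t, f i) = ∑ i ∈ t, permAct γ (f i) := map_sum (permLin γ) f t

lemma permAct_smul {n : ℕ} (γ : Equiv.Perm (Fin n)) (c : ℝ) (x : EuclideanSpace ℝ (Fin n)) :
    permAct γ (c • x) = c • permAct γ x := rfl

theorem stmt9 {n : ℕ} (Γ : Subgroup (Equiv.Perm (Fin n)))
    (V : Submodule ℝ (EuclideanSpace ℝ (Fin n)))
    (hV : ∀ γ ∈ Γ, ∀ v ∈ V, permAct γ v ∈ V)
    (z : Fin n → ℤ) (k : ℤ) (hk : ∑ i, z i = k)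
    (hmin : ∀ z' : Fin n → ℤ, ∑ i, z' i = k → ‖intVec z'‖ ≤ ‖intVec z‖ →
      ‖(V.orthogonalProjectionOnto (intVec z) : EuclideanSpace ℝ (Fin n))‖ ≤
        ‖(V.orthogonalProjectionOnto (intVec z') : EuclideanSpace ℝ (Fin n))‖) :
    IsCorePoint Γ z ↔
      IsCorePoint (stabSub Γ (V.orthogonalProjectionOnto (intVec z) : EuclideanSpace ℝ (Fin n))) z := by
  set v : EuclideanSpace ℝ (Fin n) :=
    (V.orthogonalProjectionOnto (intVec z) : EuclideanSpace ℝ (Fin n)) with hv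
  constructor
  · -- core for Γ → core for stabilizer
    intro hcore y hy
    have hsub : orbitSet (stabSub Γ v) (intVec z) ⊆ orbitSet Γ (intVec z) := by
      rintro _ ⟨γ, hγ, rfl⟩; exact ⟨γ, hγ.1, rfl⟩
    obtain ⟨γ, hγΓ, hyz⟩ := hcore y (convexHull_mono hsub hy)
    rw [convexHull_eq] at hy
    obtain ⟨ι, t, w, p, hw0, hw1, hpmem, hcm⟩ := hy
    rw [Finset.centerMass_eq_of_sum_1 _ _ hw1] at hcm
    have hPy : (V.orthogonalProjectionOnto (intVec y) : EuclideanSpace ℝ (Fin n)) = v := by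
      have h1 : (V.orthogonalProjectionOnto (intVec y) : EuclideanSpace ℝ (Fin n)) =
          ∑ i ∈ t, w i • (V.orthogonalProjectionOnto (p i) : EuclideanSpace ℝ (Fin n)) := by
        rw [← hcm, map_sum]
        push_cast
        exact Finset.sum_congr rfl fun i _ => by rw [map_smul]; rfl
      have h2 : ∀ i ∈ t, (V.orthogonalProjectionOnto (p i) : EuclideanSpace ℝ (Fin n)) = v := by
        intro i hi
        obtain ⟨s, hs, he⟩ := hpmem i hi
        rw [he, proj_comm hV hs.1, ← hv]
        exact hs.2
      rw [h1, Finset.sum_congr rfl fun i hi => by rw [h2 i hi], ← Finset.sum_smul, hw1, one_smul]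
    have hPy2 : (V.orthogonalProjectionOnto (intVec y) : EuclideanSpace ℝ (Fin n)) =
        permAct γ v := by rw [hyz, proj_comm hV hγΓ]
    have hγv : permAct γ v = v := hPy2.symm.trans hPy
    exact ⟨γ, ⟨hγΓ, hγv⟩, hyz⟩
  · -- core for stabilizer → core for Γ
    intro hcore y hy
    rw [convexHull_eq] at hy
    obtain ⟨ι, t, w, p, hw0, hw1, hpmem, hcm⟩ := hy
    rw [Finset.centerMass_eq_of_sum_1 _ _ hw1] at hcm
    have hpmem' : ∀ i : ι, ∃ g : Equiv.Perm (Fin n),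
        i ∈ t → g ∈ Γ ∧ p i = permAct g (intVec z) := by
      intro i
      by_cases hi : i ∈ t
      · obtain ⟨g, hg, he⟩ := hpmem i hi; exact ⟨g, fun _ => ⟨hg, he⟩⟩
      · exact ⟨1, fun h => absurd h hi⟩
    choose g hg using hpmem'
    -- coordinate sum of y is k
    have hky : ∑ i, y i = k := by
      have h1 : ⟪intVec y, allOnes n⟫ = (k : ℝ) := by
        rw [← hcm, sum_inner]
        have : ∀ i ∈ t, ⟪w i • p i, allOnes n⟫ = w i * (k : ℝ) := by
          intro i hi
          rw [real_inner_smul_left, sum_coords_eq_inner, (hg i hi).2, sum_permAct]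
          have : ∑ j, intVec z j = (k : ℝ) := by
            rw [← hk]; push_cast [intVec]; rfl
          rw [this]
        rw [Finset.sum_congr rfl this, ← Finset.sum_mul, hw1, one_mul]
      rw [sum_coords_eq_inner] at h1
      have : ((∑ i, y i : ℤ) : ℝ) = ((k : ℤ) : ℝ) := by push_cast; rw [← h1]; rfl
      exact_mod_cast this
    -- norm bound
    have hnorm : ‖intVec y‖ ≤ ‖intVec z‖ := by
      rw [← hcm]
      calc ‖∑ i ∈ t, w i • p i‖ ≤ ∑ i ∈ t, ‖w i • p i‖ := norm_sum_le _ _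
      _ = ∑ i ∈ t, w i * ‖intVec z‖ := by
          refine Finset.sum_congr rfl fun i hi => ?_
          rw [norm_smul, Real.norm_eq_abs, abs_of_nonneg (hw0 i hi), (hg i hi).2, norm_permAct]
      _ = ‖intVec z‖ := by rw [← Finset.sum_mul, hw1, one_mul]
    have hge : ‖v‖ ≤ ‖(V.orthogonalProjectionOnto (intVec y) : EuclideanSpace ℝ (Fin n))‖ :=
      hmin y hky hnorm
    -- projection of y as convex combination of permAct (g i) v
    have hPy : (V.orthogonalProjectionOnto (intVec y) : EuclideanSpace ℝ (Fin n)) =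
        ∑ i ∈ t, w i • permAct (g i) v := by
      have h1 : (V.orthogonalProjectionOnto (intVec y) : EuclideanSpace ℝ (Fin n)) =
          ∑ i ∈ t, w i • (V.orthogonalProjectionOnto (p i) : EuclideanSpace ℝ (Fin n)) := by
        rw [← hcm, map_sum]
        push_cast
        exact Finset.sum_congr rfl fun i _ => by rw [map_smul]; rfl
      rw [h1]
      refine Finset.sum_congr rfl fun i hi => ?_
      rw [(hg i hi).2, proj_comm hV (hg i hi).1, ← hv]
    have hqnorm : ∀ i ∈ t, ‖permAct (g i) v‖ = ‖v‖ := fun i _ => norm_permAct _ _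
    have heq := combo_eq_of_norm t w (fun i => permAct (g i) v) ‖v‖ hw0 hw1 hqnorm
      (by rw [← hPy]; exact hge)
    -- a positive weight exists
    obtain ⟨i₀, hi₀, hwi₀⟩ : ∃ i₀ ∈ t, 0 < w i₀ := by
      by_contra h
      push_neg at h
      have h0 : ∑ i ∈ t, w i = 0 :=
        Finset.sum_eq_zero fun i hi => le_antisymm (h i hi) (hw0 i hi)
      rw [hw1] at h0; norm_num at h0
    set γ₀ := g i₀ with hγ₀def
    have hγ₀Γ : γ₀ ∈ Γ := (hg i₀ hi₀).1
    have hγ₀v : ∀ i ∈ t, 0 < w i → permAct (g i) v = permAct γ₀ v := by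
      intro i hi hwi
      exact (heq i hi hwi).trans (heq i₀ hi₀ hwi₀).symm
    -- y' = y ∘ γ₀ lies in the hull of the stabilizer orbit
    set y' : Fin n → ℤ := fun i => y (γ₀ i) with hy'def
    have hy'eq : intVec y' = permAct γ₀⁻¹ (intVec y) := (permAct_intVec γ₀ y).symm
    have hrep : intVec y' = ∑ i ∈ t, w i • permAct (γ₀⁻¹ * g i) (intVec z) := by
      rw [hy'eq, ← hcm, permAct_sum]
      refine Finset.sum_congr rfl fun i hi => ?_
      rw [permAct_smul, (hg i hi).2, ← permAct_mul']
    set t' := t.filter (fun i => 0 < w i) with ht'def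
    have hw1' : ∑ i ∈ t', w i = 1 := by
      rw [ht'def, Finset.sum_filter_of_ne, hw1]
      intro i hi hne
      exact lt_of_le_of_ne (hw0 i hi) (Ne.symm hne)
    have hrep' : intVec y' = ∑ i ∈ t', w i • permAct (γ₀⁻¹ * g i) (intVec z) := by
      rw [hrep, ht'def, Finset.sum_filter_of_ne]
      intro i hi hne
      refine lt_of_le_of_ne (hw0 i hi) fun h0 => hne ?_
      rw [← h0, zero_smul]
    have hmem' : ∀ i ∈ t', permAct (γ₀⁻¹ * g i) (intVec z) ∈
        orbitSet (stabSub Γ v) (intVec z) := by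
      intro i hi
      rw [ht'def, Finset.mem_filter] at hi
      refine ⟨γ₀⁻¹ * g i, ⟨Γ.mul_mem (Γ.inv_mem hγ₀Γ) (hg i hi.1).1, ?_⟩, rfl⟩
      rw [permAct_mul', hγ₀v i hi.1 hi.2, permAct_inv_cancel]
    have hhull : intVec y' ∈ convexHull ℝ (orbitSet (stabSub Γ v) (intVec z)) := by
      rw [hrep', ← Finset.centerMass_eq_of_sum_1 _ _ hw1']
      refine Finset.centerMass_mem_convexHull t' ?_ (by rw [hw1']; norm_num) hmem'
      intro i hi
      rw [ht'def, Finset.mem_filter] at hi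
      exact le_of_lt hi.2
    obtain ⟨s, hs, hsy⟩ := hcore y' hhull
    refine ⟨γ₀ * s, Γ.mul_mem hγ₀Γ hs.1, ?_⟩
    rw [permAct_mul', ← hsy, hy'eq, permAct_cancel_inv]
end
end

section
/- Let V ⊆ R^n be a linear subspace whose only rational vector is 0 (an irrational subspace) that is orthogonal to the all-ones vector. Then for every ε > 0 and every k ∈ {1,...,n−1} there exists z ∈ Z^n with Σ_i z_i = k and ‖π_V(z)‖ < ε. -/
noncomputable section

open scoped RealInnerProductSpace

open Filter Topology Metric

/-- A closed additive subgroup of a finite-dimensional real normed space that is not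
discrete at zero contains a full line. -/
lemma lemA {E : Type*} [NormedAddCommGroup E] [NormedSpace ℝ E] [FiniteDimensional ℝ E]
    (H : AddSubgroup E) (hH : IsClosed (H : Set E))
    (hnd : ∀ ε : ℝ, 0 < ε → ∃ x, x ∈ H ∧ x ≠ 0 ∧ ‖x‖ < ε) :
    ∃ u : E, ‖u‖ = 1 ∧ ∀ t : ℝ, t • u ∈ H := by
  have hnd' : ∀ j : ℕ, ∃ x, x ∈ H ∧ x ≠ 0 ∧ ‖x‖ < 1 / (j + 1) := fun j => hnd _ (by positivity)
  choose x hxH hx0 hxs using hnd'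
  set u : ℕ → E := fun j => ‖x j‖⁻¹ • x j with hu_def
  have hun : ∀ j, u j ∈ sphere (0 : E) 1 := by
    intro j
    rw [mem_sphere_zero_iff_norm]
    exact norm_smul_inv_norm (hx0 j)
  obtain ⟨v, hv, φ, hφ, hconv⟩ := (isCompact_sphere (0 : E) 1).tendsto_subseq hun
  have hvnorm : ‖v‖ = 1 := by simpa using hv
  refine ⟨v, hvnorm, fun t => ?_⟩
  have hxnz : ∀ j, ‖x j‖ ≠ 0 := fun j => norm_ne_zero_iff.2 (hx0 j)
  set m : ℕ → ℤ := fun j => ⌊t * ‖x j‖⁻¹⌋ with hm_def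
  have hx_eq : ∀ j, x j = ‖x j‖ • u j := fun j => (smul_inv_smul₀ (hxnz j) (x j)).symm
  have hbound : ∀ j, ‖(m j : ℝ) • x j - t • u j‖ ≤ ‖x j‖ := by
    intro j
    have h1 : (m j : ℝ) • x j - t • u j = ((m j : ℝ) * ‖x j‖ - t) • u j := by
      rw [sub_smul, mul_smul]
      rw [← hx_eq j]
    rw [h1, norm_smul]
    have hus : ‖u j‖ = 1 := by simpa using hun j
    rw [hus, mul_one, Real.norm_eq_abs]
    have hfl1 : ((m j : ℝ)) ≤ t * ‖x j‖⁻¹ := Int.floor_le _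
    have hfl2 : t * ‖x j‖⁻¹ - 1 < (m j : ℝ) := Int.sub_one_lt_floor _
    have hpos : 0 < ‖x j‖ := norm_pos_iff.2 (hx0 j)
    have hinv : ‖x j‖⁻¹ * ‖x j‖ = 1 := inv_mul_cancel₀ (hxnz j)
    have e1 : (m j : ℝ) * ‖x j‖ ≤ t := by
      calc (m j : ℝ) * ‖x j‖ ≤ t * ‖x j‖⁻¹ * ‖x j‖ := mul_le_mul_of_nonneg_right hfl1 hpos.le
        _ = t := by rw [mul_assoc, hinv, mul_one]
    have e2 : t - ‖x j‖ < (m j : ℝ) * ‖x j‖ := by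
      have h6 := mul_lt_mul_of_pos_right hfl2 hpos
      have h7 : (t * ‖x j‖⁻¹ - 1) * ‖x j‖ = t - ‖x j‖ := by
        rw [sub_mul, mul_assoc, hinv, mul_one, one_mul]
      linarith
    rw [abs_le]
    constructor <;> linarith
  have hxnorm0 : Tendsto (fun j => ‖x (φ j)‖) atTop (𝓝 0) := by
    apply squeeze_zero (fun j => norm_nonneg _)
    · intro j
      have : ‖x (φ j)‖ < 1 / (φ j + 1) := hxs (φ j)
      have h2 : (1 : ℝ) / (φ j + 1) ≤ 1 / (j + 1) := by
        apply one_div_le_one_div_of_le (by positivity)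
        have h3 : (j : ℝ) ≤ φ j := by exact_mod_cast hφ.le_apply
        linarith
      linarith
    · exact tendsto_one_div_add_atTop_nhds_zero_nat
  have hkey : Tendsto (fun j => (m (φ j) : ℝ) • x (φ j)) atTop (𝓝 (t • v)) := by
    rw [tendsto_iff_norm_sub_tendsto_zero]
    apply squeeze_zero (fun j => norm_nonneg _)
      (g := fun j => ‖x (φ j)‖ + |t| * ‖u (φ j) - v‖)
    · intro j
      calc ‖(m (φ j) : ℝ) • x (φ j) - t • v‖
          ≤ ‖(m (φ j) : ℝ) • x (φ j) - t • u (φ j)‖ + ‖t • u (φ j) - t • v‖ := by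
            simpa [dist_eq_norm] using dist_triangle ((m (φ j) : ℝ) • x (φ j)) (t • u (φ j)) (t • v)
        _ ≤ ‖x (φ j)‖ + |t| * ‖u (φ j) - v‖ := by
            exact add_le_add (hbound (φ j))
              (le_of_eq (by rw [← smul_sub, norm_smul, Real.norm_eq_abs]))
    · have h2 : Tendsto (fun j => ‖u (φ j) - v‖) atTop (𝓝 0) :=
        tendsto_iff_norm_sub_tendsto_zero.mp hconv
      have := (hxnorm0.add (h2.const_mul |t|))
      simpa using this
  refine hH.mem_of_tendsto hkey (Filter.Eventually.of_forall fun j => ?_)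
  rw [Int.cast_smul_eq_zsmul ℝ]
  exact AddSubgroup.zsmul_mem H (hxH _) _

set_option maxHeartbeats 2000000 in
theorem stmt13 {n : ℕ} (V : Submodule ℝ (EuclideanSpace ℝ (Fin n)))
    (hVirr : ∀ v ∈ V, (∃ q : Fin n → ℚ, v = fun i => (q i : ℝ)) → v = 0)
    (h1V : ∀ v ∈ V, ⟪v, (allOnes n)⟫ = 0)
    (ε : ℝ) (hε : 0 < ε) (k : ℕ) (hk1 : 1 ≤ k) (hk2 : k ≤ n - 1) :
    ∃ z : Fin n → ℤ, ∑ i, z i = (k : ℤ) ∧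
      ‖(Submodule.orthogonalProjectionOnto V (intVec z) : EuclideanSpace ℝ (Fin n))‖ < ε := by
  classical
  have hn2 : 2 ≤ n := by omega
  have hn0 : 0 < n := by omega
  set i₀ : Fin n := ⟨0, hn0⟩ with hi₀
  -- the generators
  set b : Fin n × Fin n → EuclideanSpace ℝ (Fin n) := fun p =>
    EuclideanSpace.single p.1 (1:ℝ) - EuclideanSpace.single p.2 (1:ℝ) with hb
  have hbV : ∀ p, (Submodule.orthogonalProjectionOnto V (b p) : EuclideanSpace ℝ (Fin n)) ∈ V :=
    fun p => SetLike.coe_mem _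
  set G : AddSubgroup (EuclideanSpace ℝ (Fin n)) :=
    AddSubgroup.closure (Set.range fun p =>
      (Submodule.orthogonalProjectionOnto V (b p) : EuclideanSpace ℝ (Fin n))) with hG
  set H : AddSubgroup (EuclideanSpace ℝ (Fin n)) := G.topologicalClosure with hH
  have hGH : G ≤ H := AddSubgroup.le_topologicalClosure G
  have hHclosed : IsClosed (H : Set (EuclideanSpace ℝ (Fin n))) :=
    AddSubgroup.isClosed_topologicalClosure G
  have hGle : G ≤ V.toAddSubgroup := by
    rw [hG, AddSubgroup.closure_le]
    rintro x ⟨p, rfl⟩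
    exact hbV p
  have hHle : H ≤ V.toAddSubgroup :=
    AddSubgroup.topologicalClosure_minimal G hGle (Submodule.closed_of_finiteDimensional V)
  -- the subspace of lines contained in H
  set W : Submodule ℝ (EuclideanSpace ℝ (Fin n)) :=
    { carrier := {x | ∀ t : ℝ, t • x ∈ H}
      add_mem' := fun hx hy t => by simpa [smul_add] using H.add_mem (hx t) (hy t)
      zero_mem' := fun t => by simpa using H.zero_mem
      smul_mem' := fun c x hx t => by simpa [smul_smul] using hx (t * c) } with hW
  have hWmem : ∀ x, x ∈ W ↔ ∀ t : ℝ, t • x ∈ H := fun x => Iff.rfl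
  have hWH : ∀ x ∈ W, x ∈ H := fun x hx => by simpa using (hWmem x).1 hx 1
  have hWV : ∀ x ∈ W, x ∈ V := fun x hx => hHle (hWH x hx)
  -- main claim : V ≤ W
  have hVW : ∀ v ∈ V, v ∈ W := by
    by_contra hcon
    push_neg at hcon
    obtain ⟨u0, hu0V, hu0W⟩ := hcon
    set U : Submodule ℝ (EuclideanSpace ℝ (Fin n)) := V ⊓ Wᗮ with hU
    have hu1U : u0 - (Submodule.orthogonalProjectionOnto W u0 : EuclideanSpace ℝ (Fin n)) ∈ U :=
      Submodule.mem_inf.2 ⟨V.sub_mem hu0V (hWV _ (SetLike.coe_mem _)),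
        Submodule.sub_starProjection_mem_orthogonal u0⟩
    have hu1ne : u0 - (Submodule.orthogonalProjectionOnto W u0 : EuclideanSpace ℝ (Fin n)) ≠ 0 := by
      intro h
      rw [sub_eq_zero] at h
      exact hu0W (h ▸ SetLike.coe_mem (Submodule.orthogonalProjectionOnto W u0))
    set H' : AddSubgroup (EuclideanSpace ℝ (Fin n)) := H ⊓ Wᗮ.toAddSubgroup with hH'
    have hH'mem : ∀ x, x ∈ H' ↔ x ∈ H ∧ x ∈ Wᗮ := fun x => Iff.rfl
    have hH'closed : IsClosed (H' : Set (EuclideanSpace ℝ (Fin n))) := by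
      have h7 : (H' : Set (EuclideanSpace ℝ (Fin n))) =
          (H : Set (EuclideanSpace ℝ (Fin n))) ∩ (Wᗮ : Set (EuclideanSpace ℝ (Fin n))) := rfl
      rw [h7]
      exact hHclosed.inter (Submodule.closed_of_finiteDimensional _)
    have hdisc : ∃ ε0 : ℝ, 0 < ε0 ∧ ∀ x ∈ H', ‖x‖ < ε0 → x = 0 := by
      by_contra hc
      push_neg at hc
      obtain ⟨u, hu1, hu2⟩ := lemA H' hH'closed (fun δ hδ => by
        obtain ⟨x, hx1, hx3, hx2⟩ := hc δ hδ
        exact ⟨x, hx1, hx2, hx3⟩)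
      have huW : u ∈ W := fun t => ((hH'mem _).1 (hu2 t)).1
      have huWp : u ∈ Wᗮ := by
        have h8 := ((hH'mem _).1 (hu2 1)).2
        simpa using h8
      have hu0 : u = 0 :=
        inner_self_eq_zero.1 ((Submodule.mem_orthogonal W u).1 huWp u huW)
      rw [hu0] at hu1
      simp at hu1
    obtain ⟨ε0, hε0, hdisc⟩ := hdisc
    set Λ : Submodule ℤ ↥U := Submodule.span ℤ (Set.range fun p =>
      Submodule.orthogonalProjectionOnto U (b p)) with hΛ
    have hgenH' : ∀ p : Fin n × Fin n,
        ((Submodule.orthogonalProjectionOnto U (b p) : ↥U) : EuclideanSpace ℝ (Fin n)) ∈ H' := by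
      intro p
      have hmemU : ((Submodule.orthogonalProjectionOnto U (b p) : ↥U) : EuclideanSpace ℝ (Fin n)) ∈ U :=
        SetLike.coe_mem _
      refine (hH'mem _).2 ⟨?_, (Submodule.mem_inf.1 hmemU).2⟩
      have e1 : Submodule.orthogonalProjectionOnto U (b p) =
          Submodule.orthogonalProjectionOnto U ((Submodule.orthogonalProjectionOnto V (b p) : EuclideanSpace ℝ (Fin n))) := by
        have hUV : U ≤ V := inf_le_left
        have h9 : b p - (Submodule.orthogonalProjectionOnto V (b p) : EuclideanSpace ℝ (Fin n)) ∈ Uᗮ :=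
          Submodule.orthogonal_le hUV (Submodule.sub_starProjection_mem_orthogonal (b p))
        have h12 : Submodule.orthogonalProjectionOnto U (b p) -
            Submodule.orthogonalProjectionOnto U ((Submodule.orthogonalProjectionOnto V (b p) : EuclideanSpace ℝ (Fin n)))
            = 0 := by
          rw [← map_sub]
          exact Submodule.orthogonalProjectionOnto_apply_of_mem_orthogonal h9
        exact sub_eq_zero.1 h12
      have e2 : ((Submodule.orthogonalProjectionOnto U
            ((Submodule.orthogonalProjectionOnto V (b p) : EuclideanSpace ℝ (Fin n))) : ↥U) :
            EuclideanSpace ℝ (Fin n)) =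
          (Submodule.orthogonalProjectionOnto V (b p) : EuclideanSpace ℝ (Fin n)) -
          (Submodule.orthogonalProjectionOnto W ((Submodule.orthogonalProjectionOnto V (b p) : EuclideanSpace ℝ (Fin n))) :
            EuclideanSpace ℝ (Fin n)) := by
        apply Submodule.eq_starProjection_of_mem_of_inner_eq_zero
        · exact Submodule.mem_inf.2 ⟨V.sub_mem (hbV p) (hWV _ (SetLike.coe_mem _)),
            Submodule.sub_starProjection_mem_orthogonal _⟩
        · intro w hw
          have h13 : (Submodule.orthogonalProjectionOnto V (b p) : EuclideanSpace ℝ (Fin n)) -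
              ((Submodule.orthogonalProjectionOnto V (b p) : EuclideanSpace ℝ (Fin n)) -
              (Submodule.orthogonalProjectionOnto W ((Submodule.orthogonalProjectionOnto V (b p) :
                EuclideanSpace ℝ (Fin n))) : EuclideanSpace ℝ (Fin n))) =
              (Submodule.orthogonalProjectionOnto W ((Submodule.orthogonalProjectionOnto V (b p) :
                EuclideanSpace ℝ (Fin n))) : EuclideanSpace ℝ (Fin n)) := by abel
          rw [h13]
          exact (Submodule.mem_orthogonal W w).1 ((Submodule.mem_inf.1 hw).2) _
            (SetLike.coe_mem _)
      rw [e1, e2]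
      exact H.sub_mem (hGH (AddSubgroup.subset_closure ⟨p, rfl⟩))
        (hWH _ (SetLike.coe_mem (Submodule.orthogonalProjectionOnto W _)))
    have hΛH' : ∀ x : ↥U, x ∈ Λ → ((x : EuclideanSpace ℝ (Fin n)) ∈ H') := by
      intro x hx
      induction hx using Submodule.span_induction with
      | mem y hy => obtain ⟨p, rfl⟩ := hy; exact hgenH' p
      | zero => simpa using H'.zero_mem
      | add a b' _ _ ha hb' => simpa [Submodule.coe_add] using H'.add_mem ha hb'
      | smul m a _ ha =>
          have h14 : ((m • a : ↥U) : EuclideanSpace ℝ (Fin n)) =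
              m • (a : EuclideanSpace ℝ (Fin n)) := rfl
          rw [h14]
          exact AddSubgroup.zsmul_mem H' ha m
    haveI hΛdisc : DiscreteTopology ↥Λ := by
      apply discreteTopology_of_isOpen_singleton_zero
      have h15 : ({0} : Set ↥Λ) =
          (fun x : ↥Λ => ((x : ↥U) : EuclideanSpace ℝ (Fin n))) ⁻¹' (Metric.ball 0 ε0) := by
        ext x
        simp only [Set.mem_singleton_iff, Set.mem_preimage, Metric.mem_ball, dist_zero_right]
        constructor
        · rintro rfl; simpa using hε0
        · intro hx
          have h16 := hdisc _ (hΛH' _ x.2) hx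
          exact Subtype.ext (Subtype.ext h16)
      rw [h15]
      exact (continuous_subtype_val.comp continuous_subtype_val).isOpen_preimage _
        Metric.isOpen_ball
    have hbspan : V ≤ Submodule.span ℝ (Set.range b) := by
      have horth : (Submodule.span ℝ (Set.range b))ᗮ ≤ Submodule.span ℝ {allOnes n} := by
        intro yy hyy
        have hbp : ∀ p : Fin n × Fin n, ⟪b p, yy⟫ = 0 := fun p =>
          (Submodule.mem_orthogonal _ yy).1 hyy _ (Submodule.subset_span ⟨p, rfl⟩)
        have hconst : ∀ i, yy i = yy i₀ := by
          intro i
          have h15 := hbp (i, i₀)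
          simp only [hb] at h15
          rw [inner_sub_left, EuclideanSpace.inner_single_left,
            EuclideanSpace.inner_single_left] at h15
          simp at h15
          linarith
        rw [Submodule.mem_span_singleton]
        refine ⟨yy i₀, ?_⟩
        ext i
        have h16 : (yy i₀ • allOnes n) i = yy i₀ * 1 := rfl
        rw [h16, mul_one]
        exact (hconst i).symm
      intro v hv
      have h17 : v ∈ (Submodule.span ℝ (Set.range b))ᗮᗮ := by
        rw [Submodule.mem_orthogonal]
        intro u hu
        obtain ⟨a, rfl⟩ := Submodule.mem_span_singleton.1 (horth hu)
        rw [real_inner_smul_left, real_inner_comm, h1V v hv, mul_zero]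
      rwa [Submodule.orthogonal_orthogonal] at h17
    have hspantop : Submodule.span ℝ ((Λ : Set ↥U)) = ⊤ := by
      rw [hΛ, Submodule.span_span_of_tower]
      rw [eq_top_iff]
      rintro v -
      have h17 : (v : EuclideanSpace ℝ (Fin n)) ∈ Submodule.span ℝ (Set.range b) :=
        hbspan (Submodule.mem_inf.1 (SetLike.coe_mem v)).1
      have h18 : Submodule.orthogonalProjectionOnto U (v : EuclideanSpace ℝ (Fin n)) ∈
          Submodule.map ((Submodule.orthogonalProjectionOnto U : EuclideanSpace ℝ (Fin n) →L[ℝ] ↥U) :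
            EuclideanSpace ℝ (Fin n) →ₗ[ℝ] ↥U) (Submodule.span ℝ (Set.range b)) :=
        Submodule.mem_map_of_mem h17
      rw [Submodule.map_span, ← Set.range_comp] at h18
      have h19 : Submodule.orthogonalProjectionOnto U ((v : ↥U) : EuclideanSpace ℝ (Fin n)) = v :=
        Submodule.orthogonalProjectionOnto_mem_subspace_eq_self v
      rw [h19] at h18
      exact h18
    haveI : IsZLattice ℝ Λ := ⟨hspantop⟩
    haveI := ZLattice.module_finite ℝ Λ
    haveI := ZLattice.module_free ℝ Λ
    haveI hNU : Nontrivial ↥U := by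
      refine ⟨⟨_, hu1U⟩, 0, ?_⟩
      intro hq
      exact hu1ne (congrArg Subtype.val hq)
    set B0 := Module.Free.chooseBasis ℤ ↥Λ with hB0
    set B : Module.Basis (Module.Free.ChooseBasisIndex ℤ ↥Λ) ℝ ↥U := B0.ofZLatticeBasis ℝ Λ with hB
    haveI hι : Nonempty (Module.Free.ChooseBasisIndex ℤ ↥Λ) := B.index_nonempty
    obtain ⟨j0⟩ := hι
    set y : ↥U := (InnerProductSpace.toDual ℝ ↥U).symm
      (LinearMap.toContinuousLinearMap (B.coord j0)) with hy
    have hyeval : ∀ x : ↥U, ⟪y, x⟫ = B.coord j0 x := by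
      intro x
      rw [hy, InnerProductSpace.toDual_symm_apply]
      simp
    have hyint : ∀ x : ↥U, x ∈ Λ → ∃ cc : ℤ, ⟪y, x⟫ = (cc : ℝ) := by
      intro x hx
      refine ⟨B0.repr (⟨x, hx⟩ : Λ) j0, ?_⟩
      rw [hyeval, Module.Basis.coord_apply, hB]
      exact B0.ofZLatticeBasis_repr_apply ℝ Λ (⟨x, hx⟩ : Λ) j0
    set Y : EuclideanSpace ℝ (Fin n) := (y : EuclideanSpace ℝ (Fin n)) with hYdef
    have hYU : Y ∈ U := SetLike.coe_mem y
    have hYV : Y ∈ V := (Submodule.mem_inf.1 hYU).1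
    have hYint : ∀ i j : Fin n, ∃ cc : ℤ, Y i - Y j = (cc : ℝ) := by
      intro i j
      obtain ⟨cc, hcc⟩ := hyint (Submodule.orthogonalProjectionOnto U (b (i, j)))
        (Submodule.subset_span ⟨(i, j), rfl⟩)
      refine ⟨cc, ?_⟩
      rw [← hcc]
      have h20 : ⟪y, Submodule.orthogonalProjectionOnto U (b (i,j))⟫ =
          ⟪Y, ((Submodule.orthogonalProjectionOnto U (b (i,j)) : ↥U) : EuclideanSpace ℝ (Fin n))⟫ := rfl
      have h21 : ⟪Y, b (i,j) - ((Submodule.orthogonalProjectionOnto U (b (i,j)) : ↥U) :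
          EuclideanSpace ℝ (Fin n))⟫ = 0 :=
        (Submodule.mem_orthogonal U _).1 (Submodule.sub_starProjection_mem_orthogonal (b (i,j)))
          Y hYU
      rw [inner_sub_right] at h21
      have h22 : ⟪Y, b (i,j)⟫ = Y i - Y j := by
        simp only [hb]
        rw [inner_sub_right, EuclideanSpace.inner_single_right,
          EuclideanSpace.inner_single_right]
        simp
      rw [h20]
      linarith
    have hsumY : ∑ i, Y i = 0 := by
      have h23 := h1V Y hYV
      rw [PiLp.inner_apply] at h23
      simpa [allOnes] using h23
    choose c hc using fun i => hYint i i₀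
    have hY0 : Y i₀ = -(∑ j, (c j : ℝ)) / n := by
      have h24 : ∑ i, Y i = ∑ i, (Y i₀ + (c i : ℝ)) := by
        refine Finset.sum_congr rfl fun i _ => ?_
        linarith [hc i]
      rw [h24, Finset.sum_add_distrib, Finset.sum_const, Finset.card_univ, Fintype.card_fin,
        nsmul_eq_mul] at hsumY
      have hnne : (n : ℝ) ≠ 0 := by positivity
      field_simp
      linarith
    set q : Fin n → ℚ := fun i => (c i : ℚ) - (∑ j, (c j : ℚ)) / n with hq
    have hYq : Y = fun i => (q i : ℝ) := by
      funext i
      have h25 : Y i = Y i₀ + (c i : ℝ) := by linarith [hc i]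
      rw [h25, hY0, hq]
      push_cast
      ring
    have hYzero : Y = 0 := hVirr Y hYV ⟨q, hYq⟩
    have hyzero : y = 0 := Subtype.ext hYzero
    have h26 : ⟪y, B j0⟫ = (1 : ℝ) := by
      rw [hyeval, Module.Basis.coord_apply, Module.Basis.repr_self]
      simp
    rw [hyzero] at h26
    simp at h26
  -- density conclusion
  set z0 : Fin n → ℤ := fun i => if i = i₀ then (k:ℤ) else 0 with hz0
  have hz0sum : ∑ i, z0 i = (k:ℤ) := by simp [hz0]
  have hproj : -(Submodule.orthogonalProjectionOnto V (intVec z0) : EuclideanSpace ℝ (Fin n)) ∈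
      closure (G : Set (EuclideanSpace ℝ (Fin n))) := by
    have h1 : -(Submodule.orthogonalProjectionOnto V (intVec z0) : EuclideanSpace ℝ (Fin n)) ∈ V :=
      V.neg_mem (SetLike.coe_mem _)
    exact hWH _ (hVW _ h1)
  rw [Metric.mem_closure_iff] at hproj
  obtain ⟨g, hgG, hgd⟩ := hproj ε hε
  have hdecomp : ∃ w : Fin n → ℤ, ∑ i, w i = 0 ∧
      g = (Submodule.orthogonalProjectionOnto V (intVec w) : EuclideanSpace ℝ (Fin n)) := by
    refine AddSubgroup.closure_induction ?_ ?_ ?_ ?_ hgG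
    · rintro x ⟨p, rfl⟩
      refine ⟨fun i => (if i = p.1 then 1 else 0) - (if i = p.2 then 1 else 0), by simp, ?_⟩
      have : intVec (fun i => (if i = p.1 then 1 else 0) - (if i = p.2 then 1 else 0)) = b p := by
        ext i
        simp [intVec, hb, EuclideanSpace.single_apply]
      rw [this]
    · exact ⟨0, by simp, by
        have : intVec (0 : Fin n → ℤ) = 0 := by ext i; simp [intVec]
        rw [this]; simp⟩
    · rintro x y hx hy ⟨w1, hs1, rfl⟩ ⟨w2, hs2, rfl⟩
      refine ⟨w1 + w2, by simp only [Pi.add_apply, Finset.sum_add_distrib, hs1, hs2, add_zero], ?_⟩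
      have h3 : intVec (w1 + w2) = intVec w1 + intVec w2 := by
        ext i
        show ((w1 i + w2 i : ℤ) : ℝ) = (w1 i : ℝ) + (w2 i : ℝ)
        push_cast; ring
      rw [h3, map_add]
      exact (Submodule.coe_add _ _).symm
    · rintro x hx ⟨w1, hs1, rfl⟩
      refine ⟨-w1, by simp only [Pi.neg_apply, Finset.sum_neg_distrib, hs1, neg_zero], ?_⟩
      have h3 : intVec (-w1) = -intVec w1 := by
        ext i
        show ((-w1 i : ℤ) : ℝ) = -(w1 i : ℝ)
        push_cast; ring
      rw [h3, map_neg]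
      exact (Submodule.coe_neg _ _).symm
  obtain ⟨w, hwsum, rfl⟩ := hdecomp
  refine ⟨z0 + w, by simp only [Pi.add_apply, Finset.sum_add_distrib, hz0sum, hwsum, add_zero], ?_⟩
  have h3 : intVec (z0 + w) = intVec z0 + intVec w := by
    ext i
    show ((z0 i + w i : ℤ) : ℝ) = (z0 i : ℝ) + (w i : ℝ)
    push_cast; ring
  rw [h3, map_add]
  have h4 : ((Submodule.orthogonalProjectionOnto V (intVec z0) + Submodule.orthogonalProjectionOnto V (intVec w) :
      V) : EuclideanSpace ℝ (Fin n)) =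
      (Submodule.orthogonalProjectionOnto V (intVec z0) : EuclideanSpace ℝ (Fin n)) +
      (Submodule.orthogonalProjectionOnto V (intVec w) : EuclideanSpace ℝ (Fin n)) := rfl
  rw [h4]
  have h5 := hgd
  rw [dist_eq_norm] at h5
  calc ‖(Submodule.orthogonalProjectionOnto V (intVec z0) : EuclideanSpace ℝ (Fin n)) +
      (Submodule.orthogonalProjectionOnto V (intVec w) : EuclideanSpace ℝ (Fin n))‖
      = ‖-(Submodule.orthogonalProjectionOnto V (intVec z0) : EuclideanSpace ℝ (Fin n)) -
        (Submodule.orthogonalProjectionOnto V (intVec w) : EuclideanSpace ℝ (Fin n))‖ := by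
        rw [← norm_neg]; congr 1; abel
    _ < ε := h5
end
end

section
/- Let Γ ≤ S_n be a transitive imprimitive permutation group preserving a block system with blocks of size S, 1 < S < n. If k ∈ Z is not a multiple of S, then Γ has infinitely many core points z with Σ_i z_i = k. -/
noncomputable section

open scoped RealInnerProductSpace

theorem aux_core {n B S : ℕ} (Γ : Subgroup (Equiv.Perm (Fin n)))
    (β : Fin n → Fin B)
    (hsize : ∀ b : Fin B, (Finset.univ.filter fun i => β i = b).card = S)
    (hblocks : ∀ γ ∈ Γ, ∃ σ : Equiv.Perm (Fin B), ∀ i, β (γ i) = σ (β i))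
    (hS0 : 0 < S) (hn : n = S * B)
    (k : ℤ) (hk : ¬ (S : ℤ) ∣ k)
    (b0 : Fin B) (A : Finset (Fin n)) (hA : ∀ i ∈ A, β i = b0)
    (q t : ℤ) (hq : (A.card : ℤ) + S * q = k) :
    IsCorePoint Γ (fun i => (if i ∈ A then 1 else 0) + t
      + (q - B * t) * (if β i = b0 then 1 else 0)) := by
  classical
  set Q : ℤ := q - B * t with hQ
  set z : Fin n → ℤ := fun i => (if i ∈ A then 1 else 0) + t
      + Q * (if β i = b0 then 1 else 0) with hz
  intro y hy
  -- get a finite convex combination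
  rw [convexHull_eq] at hy
  obtain ⟨ι, s, w, p, hw0, hw1, hmem, hcm⟩ := hy
  rw [Finset.centerMass_eq_of_sum_1 _ _ hw1] at hcm
  choose γfun hγmem hγeq using hmem
  set g : {j // j ∈ s} → Equiv.Perm (Fin n) := fun j => γfun j j.2 with hg
  -- a base point of block b0
  have hb0ne : (Finset.univ.filter fun i => β i = b0).Nonempty := by
    rw [← Finset.card_pos, hsize]; exact hS0
  obtain ⟨i0, hi0mem⟩ := hb0ne
  have hi0 : β i0 = b0 := (Finset.mem_filter.mp hi0mem).2
  set φ : Equiv.Perm (Fin n) → Fin B := fun γ => β (γ i0) with hφ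
  have key : ∀ γ ∈ Γ, ∀ i : Fin n, (β (γ i) = φ γ ↔ β i = b0) := by
    intro γ hγ i
    obtain ⟨σ, hσ⟩ := hblocks γ hγ
    have h1 : φ γ = σ b0 := by rw [hφ]; simp only; rw [hσ i0, hi0]
    rw [hσ i, h1]
    exact ⟨fun h => σ.injective h ▸ rfl, fun h => by rw [h]⟩
  have keyinv : ∀ γ ∈ Γ, ∀ i : Fin n, (β (γ⁻¹ i) = b0 ↔ β i = φ γ) := by
    intro γ hγ i
    have h := key γ hγ (γ⁻¹ i)
    rw [← Equiv.Perm.mul_apply, mul_inv_cancel, Equiv.Perm.one_apply] at h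
    exact h.symm
  -- weight functions
  set u : Fin n → ℝ := fun i => ∑ j ∈ s.attach, w j * (if (g j)⁻¹ i ∈ A then 1 else 0)
    with hu
  set V : Fin B → ℝ := fun a => ∑ j ∈ s.attach, w j * (if φ (g j) = a then 1 else 0)
    with hV
  have hwnn : ∀ j : {j // j ∈ s}, 0 ≤ w j := fun j => hw0 j j.2
  -- master equation
  have hyi : ∀ i : Fin n, (y i : ℝ) = ∑ j ∈ s.attach, w j * (z ((g j)⁻¹ i) : ℝ) := by
    intro i
    have h1 : intVec y i = (∑ j ∈ s, w j • p j) i := by rw [hcm]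
    have h2 : (∑ j ∈ s, w j • p j) i = ∑ j ∈ s, w j * p j i := by
      rw [WithLp.ofLp_sum, Finset.sum_apply]; rfl
    have h3 : ∑ j ∈ s, w j * p j i = ∑ j ∈ s.attach, w j * p j i :=
      (Finset.sum_attach s fun j => w j * p j i).symm
    have h4 : ∀ j : {j // j ∈ s}, p j i = (z ((g j)⁻¹ i) : ℝ) := by
      intro j
      have := hγeq j j.2
      rw [this]
      rfl
    calc (y i : ℝ) = intVec y i := rfl
      _ = ∑ j ∈ s.attach, w j * p j i := by rw [h1, h2, h3]
      _ = ∑ j ∈ s.attach, w j * (z ((g j)⁻¹ i) : ℝ) := by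
          exact Finset.sum_congr rfl fun j _ => by rw [h4 j]
  have hE : ∀ i : Fin n, (y i : ℝ) = u i + (t : ℝ) + (Q : ℝ) * V (β i) := by
    intro i
    rw [hyi i]
    have expand : ∀ j : {j // j ∈ s},
        w j * (z ((g j)⁻¹ i) : ℝ)
          = w j * (if (g j)⁻¹ i ∈ A then 1 else 0) + w j * (t : ℝ)
            + (Q : ℝ) * (w j * (if φ (g j) = β i then 1 else 0)) := by
      intro j
      have hiff := keyinv (g j) (hγmem j j.2) i
      have hcast : (z ((g j)⁻¹ i) : ℝ)
          = (if (g j)⁻¹ i ∈ A then 1 else 0) + (t : ℝ)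
            + (Q : ℝ) * (if β ((g j)⁻¹ i) = b0 then 1 else 0) := by
        rw [hz]
        push_cast [apply_ite (Int.cast : ℤ → ℝ)]
        ring
      have hflip : (if β ((g j)⁻¹ i) = b0 then (1:ℝ) else 0)
          = (if φ (g j) = β i then 1 else 0) := by
        by_cases h : β ((g j)⁻¹ i) = b0
        · rw [if_pos h, if_pos ((hiff.mp h)).symm]
        · rw [if_neg h, if_neg fun hc => h (hiff.mpr hc.symm)]
      rw [hcast, hflip]; ring
    rw [Finset.sum_congr rfl fun j _ => expand j]
    rw [Finset.sum_add_distrib, Finset.sum_add_distrib]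
    have hsw : ∑ j ∈ s.attach, w j * (t : ℝ) = (t : ℝ) := by
      rw [← Finset.sum_mul, Finset.sum_attach s w, hw1, one_mul]
    have hQs : ∑ j ∈ s.attach, (Q : ℝ) * (w j * (if φ (g j) = β i then 1 else 0))
        = (Q : ℝ) * V (β i) := by
      rw [← Finset.mul_sum]
    rw [hsw, hQs]
  -- basic facts
  have hu0 : ∀ i, 0 ≤ u i := by
    intro i
    exact Finset.sum_nonneg fun j _ => mul_nonneg (hwnn j) (by positivity)
  have hV0 : ∀ a, 0 ≤ V a := by
    intro a
    exact Finset.sum_nonneg fun j _ => mul_nonneg (hwnn j) (by positivity)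
  have hVsum : ∑ a : Fin B, V a = 1 := by
    calc ∑ a : Fin B, V a
        = ∑ j ∈ s.attach, ∑ a : Fin B, w j * (if φ (g j) = a then 1 else 0) :=
          Finset.sum_comm
      _ = ∑ j ∈ s.attach, w j := by
          refine Finset.sum_congr rfl fun j _ => ?_
          rw [← Finset.mul_sum, Finset.sum_ite_eq Finset.univ (φ (g j)) (fun _ => (1:ℝ)),
            if_pos (Finset.mem_univ _), mul_one]
      _ = 1 := by rw [Finset.sum_attach s w]; exact hw1
  have hVle1 : ∀ a, V a ≤ 1 := by
    intro a
    rw [← hVsum]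
    exact Finset.single_le_sum (fun a _ => hV0 a) (Finset.mem_univ a)
  have huV : ∀ i, u i ≤ V (β i) := by
    intro i
    refine Finset.sum_le_sum fun j _ => ?_
    refine mul_le_mul_of_nonneg_left ?_ (hwnn j)
    by_cases h : (g j)⁻¹ i ∈ A
    · have h1 : β ((g j)⁻¹ i) = b0 := hA _ h
      have h2 : β i = φ (g j) := (keyinv (g j) (hγmem j j.2) i).mp h1
      rw [if_pos h, if_pos h2.symm]
    · rw [if_neg h]; positivity
  -- counting
  have hcount : ∀ (γ : Equiv.Perm (Fin n)), γ ∈ Γ → ∀ a : Fin B,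
      (∑ i ∈ Finset.univ.filter (fun i => β i = a), (if γ⁻¹ i ∈ A then (1:ℝ) else 0))
        = if φ γ = a then (A.card : ℝ) else 0 := by
    intro γ hγ a
    rw [Finset.sum_boole, Finset.filter_filter]
    by_cases hfa : φ γ = a
    · rw [if_pos hfa]
      congr 1
      have : Finset.filter (fun i => β i = a ∧ γ⁻¹ i ∈ A) Finset.univ
          = A.map γ.toEmbedding := by
        ext m
        simp only [Finset.mem_filter, Finset.mem_univ, true_and, Finset.mem_map_equiv]
        constructor
        · rintro ⟨-, h2⟩; exact h2
        · intro h
          refine ⟨?_, h⟩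
          have h1 : β (γ⁻¹ m) = b0 := hA _ h
          have h2 : β m = φ γ := (keyinv γ hγ m).mp h1
          rw [h2, hfa]
      rw [this, Finset.card_map]
    · rw [if_neg hfa]
      convert Nat.cast_zero
      rw [Finset.card_eq_zero]
      ext m
      simp only [Finset.mem_filter, Finset.mem_univ, true_and, Finset.notMem_empty,
        iff_false, not_and]
      intro h1 h2
      have h3 : β (γ⁻¹ m) = b0 := hA _ h2
      have h4 : β m = φ γ := (keyinv γ hγ m).mp h3
      exact hfa (by rw [← h4, h1])
  have husum : ∀ a : Fin B,
      (∑ i ∈ Finset.univ.filter (fun i => β i = a), u i) = (A.card : ℝ) * V a := by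
    intro a
    rw [hu]
    rw [Finset.sum_comm]
    rw [hV, Finset.mul_sum]
    refine Finset.sum_congr rfl fun j _ => ?_
    rw [← Finset.mul_sum]
    have := hcount (g j) (hγmem j j.2) a
    rw [this]
    split_ifs <;> ring
  -- Claim A
  have claimA : ∀ a : Fin B, V a ≠ 1 →
      ∃ m : ℤ, ((k - n * t : ℤ) : ℝ) * V a = ((S : ℤ) : ℝ) * m := by
    intro a hVa
    have hVlt : V a < 1 := lt_of_le_of_ne (hVle1 a) hVa
    have hane : (Finset.univ.filter fun i => β i = a).Nonempty := by
      rw [← Finset.card_pos, hsize]; exact hS0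
    obtain ⟨ia, hiamem⟩ := hane
    have hia : β ia = a := (Finset.mem_filter.mp hiamem).2
    have hueq : ∀ i ∈ Finset.univ.filter (fun i => β i = a), u i = u ia := by
      intro i hi
      have hib : β i = a := (Finset.mem_filter.mp hi).2
      have e1 : u i = (y i : ℝ) - t - (Q : ℝ) * V a := by
        have := hE i; rw [hib] at this; linarith
      have e2 : u ia = (y ia : ℝ) - t - (Q : ℝ) * V a := by
        have := hE ia; rw [hia] at this; linarith
      have hdiff : u i - u ia = ((y i - y ia : ℤ) : ℝ) := by
        rw [e1, e2]; push_cast; ring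
      have hb1 : u i ≤ V a := by have := huV i; rwa [hib] at this
      have hb2 : u ia ≤ V a := by have := huV ia; rwa [hia] at this
      have habs : |((y i - y ia : ℤ) : ℝ)| < 1 := by
        rw [← hdiff, abs_lt]
        constructor <;> nlinarith [hu0 i, hu0 ia]
      have habs' : |(y i - y ia : ℤ)| < 1 := by exact_mod_cast habs
      have : y i - y ia = 0 := Int.abs_lt_one_iff.mp habs'
      have : ((y i - y ia : ℤ) : ℝ) = 0 := by exact_mod_cast this
      linarith [hdiff]
    have hconst : (∑ i ∈ Finset.univ.filter (fun i => β i = a), u i)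
        = (S : ℝ) * u ia := by
      rw [Finset.sum_congr rfl hueq, Finset.sum_const, hsize a, nsmul_eq_mul]
    have e2 : u ia = (y ia : ℝ) - t - (Q : ℝ) * V a := by
      have := hE ia; rw [hia] at this; linarith
    have hmain : (S : ℝ) * ((y ia : ℝ) - t - (Q : ℝ) * V a) = (A.card : ℝ) * V a := by
      rw [← e2, ← hconst, husum a]
    refine ⟨y ia - t, ?_⟩
    have hnR : (n : ℝ) = (S : ℝ) * B := by exact_mod_cast hn
    have hqR : (A.card : ℝ) + (S : ℝ) * (q : ℝ) = (k : ℝ) := by exact_mod_cast hq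
    have hkey : (A.card : ℝ) + (S : ℝ) * (Q : ℝ) = (k : ℝ) - (n : ℝ) * (t : ℝ) := by
      rw [hQ]; push_cast; linear_combination hqR + (t : ℝ) * hnR
    push_cast
    linear_combination (-(V a)) * hkey - hmain
  -- Claim B : some block has V = 1
  have claimB : ∃ a0 : Fin B, V a0 = 1 := by
    by_contra hno
    push_neg at hno
    have hm : ∀ a : Fin B, ∃ m : ℤ, ((k - n * t : ℤ) : ℝ) * V a = ((S : ℤ) : ℝ) * m :=
      fun a => claimA a (hno a)
    choose m hmeq using hm
    have hsum : ((k - n * t : ℤ) : ℝ) = ((S : ℤ) : ℝ) * ((∑ a, m a : ℤ) : ℝ) := by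
      calc ((k - n * t : ℤ) : ℝ) = ((k - n * t : ℤ) : ℝ) * ∑ a, V a := by rw [hVsum]; ring
        _ = ∑ a, ((k - n * t : ℤ) : ℝ) * V a := by rw [Finset.mul_sum]
        _ = ∑ a, ((S : ℤ) : ℝ) * (m a : ℝ) := Finset.sum_congr rfl fun a _ => hmeq a
        _ = ((S : ℤ) : ℝ) * ((∑ a, m a : ℤ) : ℝ) := by push_cast; rw [Finset.mul_sum]
    have hint : (k - n * t : ℤ) = S * (∑ a, m a) := by exact_mod_cast hsum
    have hdvd1 : (S : ℤ) ∣ (k - n * t) := ⟨∑ a, m a, hint⟩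
    have hdvd2 : (S : ℤ) ∣ (n * t : ℤ) := by
      refine ⟨B * t, ?_⟩
      have : (n : ℤ) = S * B := by exact_mod_cast hn
      rw [this]; ring
    have : (S : ℤ) ∣ k := by
      have := dvd_add hdvd1 hdvd2
      simpa using this
    exact hk this
  obtain ⟨a0, hVa0⟩ := claimB
  have hVz : ∀ a : Fin B, a ≠ a0 → V a = 0 := by
    intro a ha
    have h1 : V a0 + ∑ b ∈ Finset.univ.erase a0, V b = 1 := by
      rw [Finset.add_sum_erase Finset.univ V (Finset.mem_univ a0), hVsum]
    have h2 : ∑ b ∈ Finset.univ.erase a0, V b = 0 := by rw [hVa0] at h1; linarith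
    have h3 := (Finset.sum_eq_zero_iff_of_nonneg (fun b _ => hV0 b)).mp h2
    exact h3 a (Finset.mem_erase.mpr ⟨ha, Finset.mem_univ a⟩)
  -- positive weight element
  have hjex : ∃ j : {j // j ∈ s}, 0 < w j := by
    by_contra hno
    push_neg at hno
    have : ∀ j : {j // j ∈ s}, w j = 0 := fun j => le_antisymm (hno j) (hwnn j)
    have : ∑ j ∈ s, w j = 0 := by
      rw [← Finset.sum_attach s w]
      exact Finset.sum_eq_zero fun j _ => this j
    rw [hw1] at this
    norm_num at this
  obtain ⟨jstar, hjstar⟩ := hjex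
  have hφstar : φ (g jstar) = a0 := by
    by_contra hne
    have h1 : w jstar ≤ V (φ (g jstar)) := by
      have h0 : w jstar = w jstar * (if φ (g jstar) = φ (g jstar) then (1:ℝ) else 0) := by
        simp
      rw [h0]
      exact Finset.single_le_sum
        (f := fun j : {j // j ∈ s} => w j * (if φ (g j) = φ (g jstar) then (1:ℝ) else 0))
        (fun j _ => mul_nonneg (hwnn j) (by split_ifs <;> norm_num))
        (Finset.mem_attach _ jstar)
    rw [hVz _ hne] at h1
    linarith
  -- u is 0/1 on block a0
  have hu01 : ∀ i : Fin n, β i = a0 → u i = 0 ∨ u i = 1 := by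
    intro i hi
    have e1 : u i = ((y i - t - Q : ℤ) : ℝ) := by
      have h := hE i; rw [hi, hVa0, mul_one] at h; push_cast; linarith
    have h0 : (0:ℝ) ≤ ((y i - t - Q : ℤ) : ℝ) := by rw [← e1]; exact hu0 i
    have h1 : ((y i - t - Q : ℤ) : ℝ) ≤ 1 := by
      rw [← e1]
      calc u i ≤ V (β i) := huV i
        _ = 1 := by rw [hi, hVa0]
    have h0' : (0:ℤ) ≤ y i - t - Q := by exact_mod_cast h0
    have h1' : (y i - t - Q : ℤ) ≤ 1 := by exact_mod_cast h1
    have h01 : y i - t - Q = 0 ∨ y i - t - Q = 1 := by omega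
    rcases h01 with h | h
    · left; rw [e1, h]; norm_num
    · right; rw [e1, h]; norm_num
  have huz : ∀ i : Fin n, β i ≠ a0 → u i = 0 := by
    intro i hi
    have h1 : u i ≤ V (β i) := huV i
    rw [hVz _ hi] at h1
    exact le_antisymm h1 (hu0 i)
  -- conclude
  refine ⟨g jstar, hγmem jstar jstar.2, ?_⟩
  ext i
  have hrhs : permAct (g jstar) (intVec z) i
      = (if (g jstar)⁻¹ i ∈ A then (1:ℝ) else 0) + (t : ℝ)
        + (Q : ℝ) * (if β i = a0 then 1 else 0) := by
    show (z ((g jstar)⁻¹ i) : ℝ) = _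
    rw [hz]
    push_cast [apply_ite (Int.cast : ℤ → ℝ)]
    have hiff := keyinv (g jstar) (hγmem jstar jstar.2) i
    rw [hφstar] at hiff
    have : (if β ((g jstar)⁻¹ i) = b0 then (1:ℝ) else 0) = (if β i = a0 then 1 else 0) := by
      by_cases h : β ((g jstar)⁻¹ i) = b0
      · rw [if_pos h, if_pos (hiff.mp h)]
      · rw [if_neg h, if_neg fun hc => h (hiff.mpr hc)]
    rw [this]
  show intVec y i = _
  rw [hrhs]
  have hlhs : intVec y i = u i + (t : ℝ) + (Q : ℝ) * V (β i) := hE i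
  rw [hlhs]
  by_cases hb : β i = a0
  · rw [hb, hVa0]
    by_cases hiA : (g jstar)⁻¹ i ∈ A
    · rw [if_pos hiA, if_pos rfl]
      have hui : u i = 1 := by
        rcases hu01 i hb with h | h
        · exfalso
          have hterm : w jstar * (if (g jstar)⁻¹ i ∈ A then (1:ℝ) else 0) ≤ u i :=
            Finset.single_le_sum
              (f := fun j : {j // j ∈ s} => w j * (if (g j)⁻¹ i ∈ A then (1:ℝ) else 0))
              (fun j _ => mul_nonneg (hwnn j) (by split_ifs <;> norm_num))
              (Finset.mem_attach _ jstar)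
          rw [if_pos hiA, mul_one, h] at hterm
          linarith
        · exact h
      rw [hui]
    · rw [if_neg hiA, if_pos rfl]
      have hui : u i = 0 := by
        rcases hu01 i hb with h | h
        · exact h
        · exfalso
          have hbound : u i ≤ 1 - w jstar := by
            simp only [hu]
            have : ∑ j ∈ s.attach, w j * (if (g j)⁻¹ i ∈ A then (1:ℝ) else 0)
                = ∑ j ∈ s.attach.erase jstar, w j * (if (g j)⁻¹ i ∈ A then (1:ℝ) else 0) := by
              rw [← Finset.add_sum_erase s.attach _ (Finset.mem_attach _ jstar)]
              rw [if_neg hiA, mul_zero, zero_add]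
            rw [this]
            have h2 : ∑ j ∈ s.attach.erase jstar, w j * (if (g j)⁻¹ i ∈ A then (1:ℝ) else 0)
                ≤ ∑ j ∈ s.attach.erase jstar, w j := by
              refine Finset.sum_le_sum fun j _ => ?_
              have hle : (if (g j)⁻¹ i ∈ A then (1:ℝ) else 0) ≤ 1 := by
                split_ifs <;> norm_num
              calc w j * (if (g j)⁻¹ i ∈ A then (1:ℝ) else 0) ≤ w j * 1 :=
                    mul_le_mul_of_nonneg_left hle (hwnn j)
                _ = w j := mul_one _
            have h3 : ∑ j ∈ s.attach.erase jstar, w j = 1 - w jstar := by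
              have h4 : w jstar + ∑ j ∈ s.attach.erase jstar, w j = ∑ j ∈ s.attach, w j :=
                Finset.add_sum_erase s.attach (fun j => w j.1) (Finset.mem_attach _ jstar)
              have h5 : ∑ j ∈ s.attach, w j = 1 := by
                rw [Finset.sum_attach s w]; exact hw1
              linarith
            linarith
          rw [h] at hbound
          linarith
      rw [hui]
  · have hnotA : (g jstar)⁻¹ i ∉ A := by
      intro hc
      have h1 : β ((g jstar)⁻¹ i) = b0 := hA _ hc
      have hiff := keyinv (g jstar) (hγmem jstar jstar.2) i
      rw [hφstar] at hiff
      exact hb (hiff.mp h1)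
    rw [if_neg hb, hVz _ hb, huz i hb, if_neg hnotA]


theorem stmt16 {n B S : ℕ} (Γ : Subgroup (Equiv.Perm (Fin n)))
    (htrans : ∀ i j : Fin n, ∃ γ ∈ Γ, γ i = j)
    (β : Fin n → Fin B)
    (hsize : ∀ b : Fin B, (Finset.univ.filter fun i => β i = b).card = S)
    (hblocks : ∀ γ ∈ Γ, ∃ σ : Equiv.Perm (Fin B), ∀ i, β (γ i) = σ (β i))
    (hS1 : 1 < S) (hSn : S < n)
    (k : ℤ) (hk : ¬ (S : ℤ) ∣ k) :
    {z : Fin n → ℤ | IsCorePoint Γ z ∧ ∑ i, z i = k}.Infinite := by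
  classical
  have hn0 : 0 < n := by omega
  have hnSB : n = S * B := by
    have h1 : (Finset.univ : Finset (Fin n)).card
        = ∑ b : Fin B, (Finset.univ.filter fun i => β i = b).card :=
      Finset.card_eq_sum_card_fiberwise (fun x _ => Finset.mem_univ (β x))
    rw [Finset.card_univ, Fintype.card_fin] at h1
    rw [h1]
    simp [hsize, Finset.sum_const, mul_comm]
  set b0 : Fin B := β ⟨0, hn0⟩ with hb0
  have hSZ : (0:ℤ) < (S:ℤ) := by exact_mod_cast (by omega : 0 < S)
  have hrS : ((k % (S:ℤ)).toNat) ≤ S := by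
    have h1 := Int.emod_lt_of_pos k hSZ
    have h2 := Int.emod_nonneg k (ne_of_gt hSZ)
    omega
  have hcard : (Finset.univ.filter fun i => β i = b0).card = S := hsize b0
  obtain ⟨A, hAsub, hAcard⟩ := Finset.exists_subset_card_eq
    (show ((k % (S:ℤ)).toNat) ≤ (Finset.univ.filter fun i => β i = b0).card by
      rw [hcard]; exact hrS)
  have hA : ∀ i ∈ A, β i = b0 := fun i hi => (Finset.mem_filter.mp (hAsub hi)).2
  have hAcardZ : (A.card : ℤ) = k % (S:ℤ) := by
    rw [hAcard]
    exact Int.toNat_of_nonneg (Int.emod_nonneg k (ne_of_gt hSZ))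
  set q : ℤ := k / (S:ℤ) with hqdef
  have hq : (A.card : ℤ) + (S:ℤ) * q = k := by
    have := Int.mul_ediv_add_emod k (S:ℤ)
    rw [hAcardZ, hqdef]
    linarith
  set f : ℕ → (Fin n → ℤ) := fun t => fun i => (if i ∈ A then 1 else 0) + (t:ℤ)
      + (q - (B:ℤ) * (t:ℤ)) * (if β i = b0 then 1 else 0) with hf
  have hsum : ∀ tt : ℕ, ∑ i, f tt i = k := by
    intro tt
    simp only [hf]
    rw [Finset.sum_add_distrib, Finset.sum_add_distrib]
    have h1 : ∑ i : Fin n, (if i ∈ A then (1:ℤ) else 0) = (A.card : ℤ) := by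
      rw [Finset.sum_boole]
      congr 1
      simp
    have h2 : ∑ _i : Fin n, ((tt:ℕ):ℤ) = (n:ℤ) * (tt:ℤ) := by
      simp [Finset.sum_const, Finset.card_univ, nsmul_eq_mul]
    have h3 : ∑ i : Fin n, (q - (B:ℤ)*(tt:ℤ)) * (if β i = b0 then (1:ℤ) else 0)
        = (q - (B:ℤ)*(tt:ℤ)) * (S:ℤ) := by
      rw [← Finset.mul_sum]
      congr 1
      rw [Finset.sum_boole, hcard]
    rw [h1, h2, h3]
    have hnz : (n:ℤ) = (S:ℤ) * (B:ℤ) := by exact_mod_cast hnSB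
    linear_combination hq + (tt:ℤ) * hnz
  have hi1ex : ∃ i1 : Fin n, β i1 ≠ b0 := by
    by_contra h
    push_neg at h
    have huniv : (Finset.univ : Finset (Fin n)) = Finset.univ.filter fun i => β i = b0 := by
      ext i; simp [h i]
    have hc := congrArg Finset.card huniv
    rw [Finset.card_univ, Fintype.card_fin, hcard] at hc
    omega
  obtain ⟨i1, hi1⟩ := hi1ex
  have hinot : i1 ∉ A := fun hc => hi1 (hA _ hc)
  have hfval : ∀ tt : ℕ, f tt i1 = (tt:ℤ) := by
    intro tt
    simp only [hf]
    rw [if_neg hinot, if_neg hi1]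
    ring
  have hinj : Function.Injective f := by
    intro a b hab
    have h := congrFun hab i1
    rw [hfval a, hfval b] at h
    exact_mod_cast h
  apply Set.infinite_of_injective_forall_mem hinj
  intro tt
  refine ⟨?_, hsum tt⟩
  exact aux_core Γ β hsize hblocks (by omega) hnSB k hk b0 A hA q (tt:ℤ) hq
end
end
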